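/- arXiv:1706.10034 — 6 statements merged into one kernel-verified Lean document; each statement's English description precedes it below -/
import Mathlib

section
/- Let N ≥ 1, let u₀ ∈ L¹(ℝ^N) with mass M = ∫_{ℝ^N} u₀(x) dx, and let u(x,t) = ∫_{ℝ^N} G_t(x−y) u₀(y) dy be the solution of the heat equation with initial data u₀. Then ‖u(·,t) − M·G_t‖_{L¹(ℝ^N)} → 0 as t → ∞. -/
open MeasureTheory Real Filter Topology

/-- The Gaussian heat kernel on `ℝ^N`: `G_t(x) = (4πt)^{-N/2} exp(-|x|²/(4t))`. -/
noncomputable def heatKernel (N : ℕ) (t : ℝ) (x : EuclideanSpace ℝ (Fin N)) : ℝ :=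
  (4 * π * t) ^ (-(N : ℝ) / 2) * exp (-‖x‖ ^ 2 / (4 * t))

/-- The solution of the heat equation with initial data `u₀`, given by convolution
with the heat kernel: `u(x,t) = ∫ G_t(x-y) u₀(y) dy`. -/
noncomputable def heatSol (N : ℕ) (u₀ : EuclideanSpace ℝ (Fin N) → ℝ)
    (x : EuclideanSpace ℝ (Fin N)) (t : ℝ) : ℝ :=
  ∫ y, heatKernel N t (x - y) * u₀ y

variable {N : ℕ}

lemma gauss_integrable {b : ℝ} (hb : 0 < b) :
    Integrable (fun x : EuclideanSpace ℝ (Fin N) => rexp (-b * ‖x‖ ^ 2)) := by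
  by_contra h
  have h1 := GaussianFourier.integral_rexp_neg_mul_sq_norm (V := EuclideanSpace ℝ (Fin N)) hb
  rw [integral_undef h] at h1
  have h2 : (0:ℝ) < (π / b) ^ ((Module.finrank ℝ (EuclideanSpace ℝ (Fin N)) : ℝ) / 2) :=
    rpow_pos_of_pos (by positivity) _
  rw [← h1] at h2
  exact lt_irrefl 0 h2

lemma hk_cont (t : ℝ) : Continuous (heatKernel N t) := by
  unfold heatKernel
  fun_prop

lemma hk_nonneg {t : ℝ} (ht : 0 < t) (x : EuclideanSpace ℝ (Fin N)) :
    0 ≤ heatKernel N t x := by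
  unfold heatKernel; positivity

lemma hk_le {t : ℝ} (ht : 0 < t) (x : EuclideanSpace ℝ (Fin N)) :
    heatKernel N t x ≤ (4 * π * t) ^ (-(N : ℝ) / 2) := by
  unfold heatKernel
  have h1 : rexp (-‖x‖ ^ 2 / (4 * t)) ≤ 1 := by
    rw [Real.exp_le_one_iff]
    have : (0:ℝ) ≤ ‖x‖ ^ 2 / (4 * t) := by positivity
    linarith [neg_div (4*t) (‖x‖^2)]
  nlinarith [rpow_pos_of_pos (show (0:ℝ) < 4 * π * t by positivity) (-(N:ℝ)/2)]

lemma hk_eq (t : ℝ) : heatKernel N t =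
    fun x : EuclideanSpace ℝ (Fin N) =>
      (4 * π * t) ^ (-(N : ℝ) / 2) * rexp (-(4*t)⁻¹ * ‖x‖ ^ 2) := by
  funext x; unfold heatKernel; congr 1
  rw [div_eq_inv_mul, mul_neg, neg_mul]

lemma hk_integrable {t : ℝ} (ht : 0 < t) : Integrable (heatKernel N t) := by
  rw [hk_eq]
  exact (gauss_integrable (by positivity)).const_mul _

lemma hk_integral {t : ℝ} (ht : 0 < t) : ∫ x : EuclideanSpace ℝ (Fin N), heatKernel N t x = 1 := by
  rw [hk_eq]
  rw [integral_const_mul,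
    GaussianFourier.integral_rexp_neg_mul_sq_norm (by positivity : (0:ℝ) < (4*t)⁻¹)]
  rw [finrank_euclideanSpace_fin]
  have h4 : π / (4 * t)⁻¹ = 4 * π * t := by field_simp
  rw [h4, ← Real.rpow_add (by positivity), neg_div, neg_add_cancel, Real.rpow_zero]

lemma hk_scale {t : ℝ} (ht : 0 < t) (z : EuclideanSpace ℝ (Fin N)) :
    heatKernel N t (Real.sqrt t • z) = t ^ (-(N : ℝ) / 2) * heatKernel N 1 z := by
  unfold heatKernel
  have hn : ‖Real.sqrt t • z‖ ^ 2 = t * ‖z‖ ^ 2 := by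
    rw [norm_smul, Real.norm_eq_abs, abs_of_nonneg (Real.sqrt_nonneg t), mul_pow,
      Real.sq_sqrt ht.le]
  rw [hn]
  have h1 : -(t * ‖z‖ ^ 2) / (4 * t) = -‖z‖ ^ 2 / (4 * 1) := by
    field_simp
  rw [h1]
  have h2 : (4 * π * t) ^ (-(N : ℝ) / 2) = t ^ (-(N : ℝ) / 2) * (4 * π * 1) ^ (-(N : ℝ) / 2) := by
    rw [mul_one, mul_comm (t ^ (-(N:ℝ)/2)), ← Real.mul_rpow (by positivity) ht.le]
  rw [h2]; ring

lemma phi_le_two {t : ℝ} (ht : 0 < t) (y : EuclideanSpace ℝ (Fin N)) :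
    ∫ x : EuclideanSpace ℝ (Fin N), |heatKernel N t (x - y) - heatKernel N t x| ≤ 2 := by
  have h1 : Integrable (fun x : EuclideanSpace ℝ (Fin N) => heatKernel N t (x - y)) :=
    (hk_integrable ht).comp_sub_right y
  have h2 := hk_integrable (N := N) ht
  calc ∫ x : EuclideanSpace ℝ (Fin N), |heatKernel N t (x - y) - heatKernel N t x|
      ≤ ∫ x : EuclideanSpace ℝ (Fin N), (heatKernel N t (x - y) + heatKernel N t x) := by
        apply integral_mono ((h1.sub h2).abs) (h1.add h2)
        intro x
        calc |heatKernel N t (x - y) - heatKernel N t x|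
            ≤ |heatKernel N t (x - y)| + |heatKernel N t x| := abs_sub _ _
          _ = heatKernel N t (x - y) + heatKernel N t x := by
              rw [abs_of_nonneg (hk_nonneg ht _), abs_of_nonneg (hk_nonneg ht _)]
    _ = 2 := by
        rw [integral_add h1 h2, integral_sub_right_eq_self (heatKernel N t) y,
          hk_integral ht]
        norm_num

lemma G1_bound {R : ℝ} {w : EuclideanSpace ℝ (Fin N)} (hw : ‖w‖ ≤ R)
    (z : EuclideanSpace ℝ (Fin N)) :
    heatKernel N 1 (z - w) ≤
      (4 * π * 1) ^ (-(N : ℝ) / 2) * (rexp (R ^ 2 / 4) * rexp (-(8 : ℝ)⁻¹ * ‖z‖ ^ 2)) := by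
  unfold heatKernel
  apply mul_le_mul_of_nonneg_left _ (by positivity)
  rw [← Real.exp_add, Real.exp_le_exp]
  have h1 : ‖z‖ ≤ ‖z - w‖ + ‖w‖ := by
    have := norm_add_le (z - w) w
    simpa using this
  have h0 : (0:ℝ) ≤ ‖w‖ := norm_nonneg w
  have h2 : (0:ℝ) ≤ ‖z - w‖ := norm_nonneg _
  have h3 : (0:ℝ) ≤ ‖z‖ := norm_nonneg _
  nlinarith [sq_nonneg (‖z - w‖ - ‖w‖)]

lemma sqrt_tendsto : Tendsto Real.sqrt atTop atTop :=
  (tendsto_rpow_atTop (by norm_num : (0:ℝ) < 1/2)).congr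
    (fun x => (Real.sqrt_eq_rpow x).symm)

lemma phi_tendsto (y : EuclideanSpace ℝ (Fin N)) :
    Tendsto (fun t : ℝ => ∫ x : EuclideanSpace ℝ (Fin N),
      |heatKernel N t (x - y) - heatKernel N t x|) atTop (𝓝 0) := by
  set H : ℝ → ℝ := fun t => ∫ z : EuclideanSpace ℝ (Fin N),
    |heatKernel N 1 (z - (Real.sqrt t)⁻¹ • y) - heatKernel N 1 z| with hH
  have hcont1 : Continuous (fun p : EuclideanSpace ℝ (Fin N) × EuclideanSpace ℝ (Fin N) =>
      |heatKernel N 1 (p.1 - p.2) - heatKernel N 1 p.1|) :=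
    (((hk_cont 1).comp (continuous_fst.sub continuous_snd)).sub
      ((hk_cont 1).comp continuous_fst)).abs
  have hHlim : Tendsto H atTop (𝓝 0) := by
    have h0 : (𝓝 (0:ℝ)) = 𝓝 (∫ _z : EuclideanSpace ℝ (Fin N), (0:ℝ)) := by
      rw [integral_zero]
    rw [hH, h0]
    apply tendsto_integral_filter_of_dominated_convergence
      (fun z => 2 * ((4 * π * 1) ^ (-(N : ℝ) / 2) *
        (rexp (‖y‖ ^ 2 / 4) * rexp (-(8 : ℝ)⁻¹ * ‖z‖ ^ 2))))
    · filter_upwards with t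
      exact ((((hk_cont 1).comp (continuous_id.sub continuous_const)).sub
        (hk_cont 1)).abs).aestronglyMeasurable
    · filter_upwards [eventually_ge_atTop (1:ℝ)] with t ht
      filter_upwards with z
      have hwle : ‖(Real.sqrt t)⁻¹ • y‖ ≤ ‖y‖ := by
        rw [norm_smul, Real.norm_eq_abs, abs_of_nonneg (by positivity)]
        have h1 : (1:ℝ) ≤ Real.sqrt t := by
          rw [show (1:ℝ) = Real.sqrt 1 from (Real.sqrt_one).symm]
          exact Real.sqrt_le_sqrt ht
        nlinarith [inv_le_one_of_one_le₀ h1, norm_nonneg y,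
          inv_nonneg.2 (Real.sqrt_nonneg t)]
      have hb1 := G1_bound (N := N) hwle z
      have hb2 : heatKernel N 1 z ≤
          (4 * π * 1) ^ (-(N : ℝ) / 2) * (rexp (‖y‖ ^ 2 / 4) * rexp (-(8 : ℝ)⁻¹ * ‖z‖ ^ 2)) := by
        have := G1_bound (N := N) (R := ‖y‖) (w := 0) (by simp) z
        simpa using this
      have hn1 : (0:ℝ) ≤ heatKernel N 1 (z - (Real.sqrt t)⁻¹ • y) := hk_nonneg one_pos _
      have hn2 : (0:ℝ) ≤ heatKernel N 1 z := hk_nonneg one_pos _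
      rw [Real.norm_eq_abs, abs_abs]
      calc |heatKernel N 1 (z - (Real.sqrt t)⁻¹ • y) - heatKernel N 1 z|
          ≤ |heatKernel N 1 (z - (Real.sqrt t)⁻¹ • y)| + |heatKernel N 1 z| := abs_sub _ _
        _ = heatKernel N 1 (z - (Real.sqrt t)⁻¹ • y) + heatKernel N 1 z := by
            rw [abs_of_nonneg hn1, abs_of_nonneg hn2]
        _ ≤ _ := by linarith
    · exact (((gauss_integrable (by norm_num : (0:ℝ) < 8⁻¹)).const_mul
        (rexp (‖y‖ ^ 2 / 4))).const_mul ((4 * π * 1) ^ (-(N : ℝ) / 2))).const_mul 2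
    · filter_upwards with z
      have hw : Tendsto (fun t : ℝ => (Real.sqrt t)⁻¹ • y) atTop (𝓝 (0 : EuclideanSpace ℝ (Fin N))) := by
        have h1 : Tendsto (fun t : ℝ => (Real.sqrt t)⁻¹) atTop (𝓝 0) :=
          sqrt_tendsto.inv_tendsto_atTop
        simpa using h1.smul_const y
      have hc : Continuous (fun w : EuclideanSpace ℝ (Fin N) =>
          |heatKernel N 1 (z - w) - heatKernel N 1 z|) :=
        (((hk_cont 1).comp (continuous_const.sub continuous_id)).sub continuous_const).abs
      have := (hc.tendsto 0).comp hw
      simpa [Function.comp_def] using this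
  apply hHlim.congr'
  filter_upwards [eventually_gt_atTop (0:ℝ)] with t ht
  have hs : (0:ℝ) < Real.sqrt t := Real.sqrt_pos.2 ht
  have key := Measure.integral_comp_smul_of_nonneg (μ := volume)
    (fun x : EuclideanSpace ℝ (Fin N) => |heatKernel N t (x - y) - heatKernel N t x|)
    (Real.sqrt t) (hR := Real.sqrt_nonneg t)
  rw [finrank_euclideanSpace_fin] at key
  have hpt : ∀ z : EuclideanSpace ℝ (Fin N),
      |heatKernel N t (Real.sqrt t • z - y) - heatKernel N t (Real.sqrt t • z)| =
        t ^ (-(N : ℝ) / 2) * |heatKernel N 1 (z - (Real.sqrt t)⁻¹ • y) - heatKernel N 1 z| := by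
    intro z
    have hzz : Real.sqrt t • z - y = Real.sqrt t • (z - (Real.sqrt t)⁻¹ • y) := by
      rw [smul_sub, smul_inv_smul₀ hs.ne']
    rw [hzz, hk_scale ht, hk_scale ht, ← mul_sub, abs_mul,
      abs_of_nonneg (Real.rpow_nonneg ht.le _)]
  simp only [hpt] at key
  rw [integral_const_mul] at key
  have hsn : (Real.sqrt t) ^ N = t ^ ((N : ℝ) / 2) := by
    rw [Real.sqrt_eq_rpow, ← Real.rpow_natCast (t ^ ((1:ℝ)/2)) N, ← Real.rpow_mul ht.le]
    congr 1
    ring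
  rw [smul_eq_mul, hsn] at key
  have hne : t ^ ((N : ℝ) / 2) ≠ 0 := (rpow_pos_of_pos ht _).ne'
  have h2 : t ^ ((N : ℝ) / 2) * t ^ (-(N : ℝ) / 2) = 1 := by
    rw [← Real.rpow_add ht, show (N : ℝ) / 2 + -(N : ℝ) / 2 = 0 by ring, Real.rpow_zero]
  have key2 : t ^ (-(N : ℝ) / 2) * H t = (t ^ ((N : ℝ) / 2))⁻¹ *
      ∫ x : EuclideanSpace ℝ (Fin N), |heatKernel N t (x - y) - heatKernel N t x| := by
    simpa [hH] using key
  calc H t = t ^ ((N : ℝ) / 2) * (t ^ (-(N : ℝ) / 2) * H t) := by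
        rw [← mul_assoc, h2, one_mul]
    _ = t ^ ((N : ℝ) / 2) * ((t ^ ((N : ℝ) / 2))⁻¹ *
        ∫ x : EuclideanSpace ℝ (Fin N), |heatKernel N t (x - y) - heatKernel N t x|) := by
        rw [key2]
    _ = _ := by rw [← mul_assoc, mul_inv_cancel₀ hne, one_mul]

/-- Convergence to the Gaussian in `L¹`:
`‖u(·,t) − M·G_t‖_{L¹(ℝ^N)} → 0` as `t → ∞`. -/
theorem heat_convergence_to_gaussian_L1 (N : ℕ) (hN : 1 ≤ N)
    (u₀ : EuclideanSpace ℝ (Fin N) → ℝ) (hu₀ : Integrable u₀)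
    (M : ℝ) (hM : M = ∫ x, u₀ x) :
    Tendsto (fun t : ℝ => ∫ x, |heatSol N u₀ x t - M * heatKernel N t x|)
      atTop (nhds 0) := by
  have hΨ : Tendsto (fun t : ℝ => ∫ y : EuclideanSpace ℝ (Fin N),
      (∫ x : EuclideanSpace ℝ (Fin N), |heatKernel N t (x - y) - heatKernel N t x|) * |u₀ y|)
      atTop (𝓝 0) := by
    have h0 : (𝓝 (0:ℝ)) = 𝓝 (∫ _y : EuclideanSpace ℝ (Fin N), (0:ℝ)) := by rw [integral_zero]
    rw [h0]
    apply tendsto_integral_filter_of_dominated_convergence (fun y => 2 * |u₀ y|)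
    · filter_upwards with t
      have hsm : StronglyMeasurable (fun p : EuclideanSpace ℝ (Fin N) × EuclideanSpace ℝ (Fin N) =>
          |heatKernel N t (p.1 - p.2) - heatKernel N t p.1|) :=
        ((((hk_cont t).comp (continuous_fst.sub continuous_snd)).sub
          ((hk_cont t).comp continuous_fst)).abs).stronglyMeasurable
      exact (hsm.integral_prod_left').aestronglyMeasurable.mul hu₀.1.norm
    · filter_upwards [eventually_gt_atTop (0:ℝ)] with t ht
      filter_upwards with y
      rw [Real.norm_eq_abs, abs_mul, abs_abs,
        abs_of_nonneg (integral_nonneg fun x => abs_nonneg _)]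
      exact mul_le_mul_of_nonneg_right (phi_le_two ht y) (abs_nonneg _)
    · exact hu₀.abs.const_mul 2
    · filter_upwards with y
      simpa using (phi_tendsto (N := N) y).mul_const |u₀ y|
  apply squeeze_zero' _ _ hΨ
  · filter_upwards with t; exact integral_nonneg fun x => abs_nonneg _
  filter_upwards [eventually_gt_atTop (0:ℝ)] with t ht
  have hGint := hk_integrable (N := N) ht
  -- product integrability
  have hmeasK : AEStronglyMeasurable
      (fun p : EuclideanSpace ℝ (Fin N) × EuclideanSpace ℝ (Fin N) =>
        |heatKernel N t (p.1 - p.2) - heatKernel N t p.1| * |u₀ p.2|)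
      (volume.prod volume) := by
    refine (((((hk_cont t).comp (continuous_fst.sub continuous_snd)).sub
      ((hk_cont t).comp continuous_fst)).abs).aestronglyMeasurable).mul ?_
    exact hu₀.1.norm.comp_quasiMeasurePreserving Measure.quasiMeasurePreserving_snd
  have h1 : Integrable (fun p : EuclideanSpace ℝ (Fin N) × EuclideanSpace ℝ (Fin N) =>
      |u₀ p.2| * heatKernel N t (p.1 - p.2)) (volume.prod volume) := by
    have := (hu₀.abs).convolution_integrand (ContinuousLinearMap.mul ℝ ℝ) hGint
    simpa using this
  have h2 : Integrable (fun p : EuclideanSpace ℝ (Fin N) × EuclideanSpace ℝ (Fin N) =>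
      heatKernel N t p.1 * |u₀ p.2|) (volume.prod volume) := hGint.mul_prod hu₀.abs
  have hK : Integrable (fun p : EuclideanSpace ℝ (Fin N) × EuclideanSpace ℝ (Fin N) =>
      |heatKernel N t (p.1 - p.2) - heatKernel N t p.1| * |u₀ p.2|) (volume.prod volume) := by
    apply (h1.add h2).mono' hmeasK
    filter_upwards with p
    simp only [Pi.add_apply]
    have hn1 := hk_nonneg (N := N) ht (p.1 - p.2)
    have hn2 := hk_nonneg (N := N) ht p.1
    rw [Real.norm_eq_abs, abs_mul, abs_abs, abs_abs]
    have habs : |heatKernel N t (p.1 - p.2) - heatKernel N t p.1| ≤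
        heatKernel N t (p.1 - p.2) + heatKernel N t p.1 := by
      calc |heatKernel N t (p.1 - p.2) - heatKernel N t p.1|
          ≤ |heatKernel N t (p.1 - p.2)| + |heatKernel N t p.1| := abs_sub _ _
        _ = _ := by rw [abs_of_nonneg hn1, abs_of_nonneg hn2]
    nlinarith [abs_nonneg (u₀ p.2)]
  -- pointwise representation
  have hrep : ∀ x : EuclideanSpace ℝ (Fin N), heatSol N u₀ x t - M * heatKernel N t x =
      ∫ y, (heatKernel N t (x - y) - heatKernel N t x) * u₀ y := by
    intro x
    have hint1 : Integrable (fun y => heatKernel N t (x - y) * u₀ y) := by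
      have hc : Continuous fun y : EuclideanSpace ℝ (Fin N) => heatKernel N t (x - y) :=
        (hk_cont t).comp (continuous_const.sub continuous_id)
      apply hu₀.bdd_mul (c := (4 * π * t) ^ (-(N : ℝ) / 2)) hc.aestronglyMeasurable
      refine Eventually.of_forall fun y => ?_
      rw [Real.norm_eq_abs, abs_of_nonneg (hk_nonneg ht _)]
      exact hk_le ht _
    have hint2 : Integrable (fun y => heatKernel N t x * u₀ y) := hu₀.const_mul _
    have hMrw : M * heatKernel N t x = ∫ y, heatKernel N t x * u₀ y := by
      rw [integral_const_mul, hM]; ring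
    rw [heatSol, hMrw, ← integral_sub hint1 hint2]
    congr 1; funext y; ring
  calc ∫ x, |heatSol N u₀ x t - M * heatKernel N t x|
      = ∫ x : EuclideanSpace ℝ (Fin N),
          |∫ y, (heatKernel N t (x - y) - heatKernel N t x) * u₀ y| := by
        simp only [hrep]
    _ ≤ ∫ x : EuclideanSpace ℝ (Fin N),
          ∫ y, |heatKernel N t (x - y) - heatKernel N t x| * |u₀ y| := by
        apply integral_mono_of_nonneg (Eventually.of_forall fun x => abs_nonneg _)
          hK.integral_prod_left
        filter_upwards with x
        have hle := norm_integral_le_integral_norm (μ := volume)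
          (f := fun y => (heatKernel N t (x - y) - heatKernel N t x) * u₀ y)
        rw [Real.norm_eq_abs] at hle
        refine hle.trans_eq ?_
        simp only [Real.norm_eq_abs, abs_mul]
    _ = ∫ y : EuclideanSpace ℝ (Fin N),
          ∫ x, |heatKernel N t (x - y) - heatKernel N t x| * |u₀ y| :=
        integral_integral_swap hK
    _ = ∫ y : EuclideanSpace ℝ (Fin N),
          (∫ x, |heatKernel N t (x - y) - heatKernel N t x|) * |u₀ y| := by
        congr 1; funext y; exact integral_mul_const _ _
end

section
/- Let N ≥ 1, let u₀ ∈ L¹(ℝ^N) with mass M = ∫_{ℝ^N} u₀(x) dx, and let u(x,t) = ∫_{ℝ^N} G_t(x−y) u₀(y) dy. Then t^{N/2} ‖u(·,t) − M·G_t‖_{L^∞(ℝ^N)} → 0 as t → ∞. -/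
open MeasureTheory Real Filter

lemma expsq_lip : LipschitzWith 1 (fun s : ℝ => exp (-s^2)) := by
  apply lipschitzWith_of_nnnorm_deriv_le
  · fun_prop
  · intro x
    have hd : deriv (fun s : ℝ => exp (-s^2)) x = exp (-x^2) * (-(2*x)) := by
      rw [show (fun s : ℝ => exp (-s^2)) = Real.exp ∘ (fun s : ℝ => -s^2) by rfl,
        deriv_comp _ (Real.differentiable_exp _) (by fun_prop)]
      simp [Real.deriv_exp]
    rw [← NNReal.coe_le_coe, coe_nnnorm, hd]
    have h1 : |2*x| ≤ exp (x^2) := by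
      have := add_one_le_exp (x^2)
      have h2 : |2*x| ≤ x^2 + 1 := by
        rcases abs_cases (2*x) with ⟨h,_⟩|⟨h,_⟩ <;> rw [h] <;>
          nlinarith [sq_nonneg (x-1), sq_nonneg (x+1)]
      linarith
    rw [Real.norm_eq_abs, abs_mul, abs_exp]
    rw [show (-x^2 : ℝ) = -(x^2) by ring, Real.exp_neg]
    rw [abs_neg]
    rw [inv_mul_le_iff₀ (exp_pos _)]
    simpa using h1

lemma expsq_diff_le (a b : ℝ) : |exp (-a^2) - exp (-b^2)| ≤ min 1 |a - b| := by
  apply le_min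
  · have h1 : exp (-a^2) ≤ 1 := exp_le_one_iff.mpr (by nlinarith [sq_nonneg a])
    have h2 : exp (-b^2) ≤ 1 := exp_le_one_iff.mpr (by nlinarith [sq_nonneg b])
    have h3 := exp_pos (-a^2)
    have h4 := exp_pos (-b^2)
    rw [abs_sub_le_iff]; constructor <;> linarith
  · have := expsq_lip.dist_le_mul a b
    simpa [Real.dist_eq] using this

lemma kernel_eq (N : ℕ) {t : ℝ} (ht : 0 < t) (z : EuclideanSpace ℝ (Fin N)) :
    heatKernel N t z = (4 * π * t) ^ (-(N : ℝ) / 2) * exp (-(‖z‖ / (2 * Real.sqrt t))^2) := by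
  unfold heatKernel
  congr 2
  rw [div_pow, mul_pow, sq_sqrt ht.le]
  ring_nf

lemma kernel_diff_le (N : ℕ) {t : ℝ} (ht : 0 < t) (x y : EuclideanSpace ℝ (Fin N)) :
    |heatKernel N t (x - y) - heatKernel N t x| ≤
      (4 * π * t) ^ (-(N : ℝ) / 2) * min 1 (‖y‖ / (2 * Real.sqrt t)) := by
  rw [kernel_eq N ht, kernel_eq N ht, ← mul_sub, abs_mul]
  have hc : (0:ℝ) < 4 * π * t := by positivity
  rw [abs_of_pos (rpow_pos_of_pos hc _)]
  apply mul_le_mul_of_nonneg_left _ (rpow_pos_of_pos hc _).le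
  refine (expsq_diff_le _ _).trans (min_le_min le_rfl ?_)
  have hst : 0 < 2 * Real.sqrt t := by positivity
  rw [abs_sub_comm, ← sub_div, abs_div, abs_of_pos hst, div_le_div_iff_of_pos_right hst]
  calc |‖x‖ - ‖x - y‖| ≤ ‖x - (x - y)‖ := abs_norm_sub_norm_le _ _
    _ = ‖y‖ := by rw [sub_sub_cancel]

lemma kernel_cont (N : ℕ) (t : ℝ) (x : EuclideanSpace ℝ (Fin N)) :
    Continuous (fun y : EuclideanSpace ℝ (Fin N) => heatKernel N t (x - y)) := by
  unfold heatKernel; fun_prop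

lemma kernel_bdd (N : ℕ) {t : ℝ} (ht : 0 < t) (x z : EuclideanSpace ℝ (Fin N)) :
    ‖heatKernel N t z‖ ≤ (4 * π * t) ^ (-(N : ℝ) / 2) := by
  have hc : (0:ℝ) < 4 * π * t := by positivity
  have hcp := rpow_pos_of_pos hc (-(N:ℝ)/2)
  have he : exp (-‖z‖^2 / (4*t)) ≤ 1 := exp_le_one_iff.mpr
    (div_nonpos_of_nonpos_of_nonneg (neg_nonpos.mpr (by positivity)) (by positivity))
  unfold heatKernel
  rw [Real.norm_eq_abs, abs_mul, abs_of_pos hcp, abs_exp]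
  nlinarith [exp_pos (-‖z‖^2 / (4*t))]

/-- Convergence to the Gaussian in sup norm with the natural weight:
`t^{N/2} ‖u(·,t) − M·G_t‖_{L^∞(ℝ^N)} → 0` as `t → ∞`. -/
theorem heat_convergence_to_gaussian_Linfty (N : ℕ) (hN : 1 ≤ N)
    (u₀ : EuclideanSpace ℝ (Fin N) → ℝ) (hu₀ : Integrable u₀)
    (M : ℝ) (hM : M = ∫ x, u₀ x) :
    Tendsto (fun t : ℝ => t ^ ((N : ℝ) / 2) *
        ⨆ x : EuclideanSpace ℝ (Fin N), |heatSol N u₀ x t - M * heatKernel N t x|)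
      atTop (nhds 0) := by
  set J : ℝ → ℝ := fun t => ∫ y, min 1 (‖y‖ / (2 * Real.sqrt t)) * |u₀ y| with hJdef
  -- nonnegativity of J integrand
  have hmin_nonneg : ∀ (t : ℝ) (y : EuclideanSpace ℝ (Fin N)),
      0 ≤ min 1 (‖y‖ / (2 * Real.sqrt t)) := fun t y =>
    le_min zero_le_one (by positivity)
  have hJ_nonneg : ∀ t, 0 ≤ J t := fun t =>
    integral_nonneg fun y => mul_nonneg (hmin_nonneg t y) (abs_nonneg _)
  -- integrability of the J integrand
  have hJint : ∀ t : ℝ, Integrable (fun y : EuclideanSpace ℝ (Fin N) =>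
      min 1 (‖y‖ / (2 * Real.sqrt t)) * |u₀ y|) := by
    intro t
    refine hu₀.abs.bdd_mul (c := 1) ?_ (Eventually.of_forall fun y => ?_)
    · exact (Continuous.min continuous_const (by fun_prop)).aestronglyMeasurable
    · rw [Real.norm_eq_abs, abs_of_nonneg (hmin_nonneg t y)]
      exact min_le_left _ _
  -- J → 0 by dominated convergence
  have hJ0 : Tendsto J atTop (nhds 0) := by
    have h := tendsto_integral_filter_of_dominated_convergence
      (μ := (volume : Measure (EuclideanSpace ℝ (Fin N))))
      (F := fun t y => min 1 (‖y‖ / (2 * Real.sqrt t)) * |u₀ y|)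
      (f := fun _ => (0:ℝ)) (l := atTop)
      (fun y => |u₀ y|)
      (Eventually.of_forall fun t => ((hJint t)).aestronglyMeasurable)
      (Eventually.of_forall fun t => Eventually.of_forall fun y => by
        rw [Real.norm_eq_abs, abs_mul, abs_of_nonneg (hmin_nonneg t y), abs_abs]
        calc min 1 (‖y‖ / (2 * Real.sqrt t)) * |u₀ y| ≤ 1 * |u₀ y| :=
              mul_le_mul_of_nonneg_right (min_le_left _ _) (abs_nonneg _)
          _ = |u₀ y| := one_mul _)
      hu₀.abs
      (Eventually.of_forall fun y => by
        have hsq : Tendsto Real.sqrt atTop atTop := by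
          have : Real.sqrt = fun x : ℝ => x ^ (1/2 : ℝ) := funext fun x => Real.sqrt_eq_rpow x
          rw [this]; exact tendsto_rpow_atTop (by norm_num)
        have h1 : Tendsto (fun t : ℝ => ‖y‖ / (2 * Real.sqrt t)) atTop (nhds 0) :=
          Tendsto.div_atTop tendsto_const_nhds (hsq.const_mul_atTop two_pos)
        have hcont : Continuous (fun s : ℝ => min 1 s) := by fun_prop
        have h2 : Tendsto (fun t : ℝ => min 1 (‖y‖ / (2 * Real.sqrt t))) atTop (nhds 0) := by
          have := (hcont.tendsto (0:ℝ)).comp h1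
          simpa [Function.comp_def] using this
        simpa using h2.mul_const |u₀ y|)
    simpa using h
  -- key pointwise bound: for t > 0 and all x
  have key : ∀ t : ℝ, 0 < t → ∀ x : EuclideanSpace ℝ (Fin N),
      |heatSol N u₀ x t - M * heatKernel N t x| ≤ (4 * π * t) ^ (-(N : ℝ) / 2) * J t := by
    intro t ht x
    set c : ℝ := (4 * π * t) ^ (-(N : ℝ) / 2) with hc
    have hcpos : 0 < c := rpow_pos_of_pos (by positivity) _
    have hint1 : Integrable (fun y => heatKernel N t (x - y) * u₀ y) :=
      hu₀.bdd_mul (kernel_cont N t x).aestronglyMeasurable (c := c) (Eventually.of_forall fun y => kernel_bdd N ht x _)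
    have hint2 : Integrable (fun y => heatKernel N t x * u₀ y) := hu₀.const_mul _
    have hMx : M * heatKernel N t x = ∫ y, heatKernel N t x * u₀ y := by
      rw [integral_const_mul, hM]; ring
    have hdiff : heatSol N u₀ x t - M * heatKernel N t x =
        ∫ y, (heatKernel N t (x - y) - heatKernel N t x) * u₀ y := by
      rw [hMx]
      unfold heatSol
      rw [← integral_sub hint1 hint2]
      congr 1; funext y; ring
    rw [hdiff]
    calc |∫ y, (heatKernel N t (x - y) - heatKernel N t x) * u₀ y|
        ≤ ∫ y, |heatKernel N t (x - y) - heatKernel N t x| * |u₀ y| := by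
          simpa [Real.norm_eq_abs, abs_mul] using
            norm_integral_le_integral_norm
              (fun y => (heatKernel N t (x - y) - heatKernel N t x) * u₀ y)
      _ ≤ ∫ y, c * (min 1 (‖y‖ / (2 * Real.sqrt t)) * |u₀ y|) := by
          have hintd : Integrable
              (fun y => (heatKernel N t (x - y) - heatKernel N t x) * u₀ y) := by
            have := hint1.sub hint2
            simpa [sub_mul, Pi.sub_def] using this
          have hintd' : Integrable
              (fun y => |heatKernel N t (x - y) - heatKernel N t x| * |u₀ y|) := by
            simpa [abs_mul] using hintd.abs
          apply integral_mono hintd' ((hJint t).const_mul c)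
          intro y
          dsimp only
          rw [← mul_assoc]
          exact mul_le_mul_of_nonneg_right (kernel_diff_le N ht x y) (abs_nonneg _)
      _ = c * J t := integral_const_mul c _
  -- squeeze
  apply squeeze_zero' (g := fun t => (4 * π) ^ (-(N : ℝ) / 2) * J t)
  · filter_upwards [eventually_ge_atTop (0:ℝ)] with t ht
    exact mul_nonneg (rpow_nonneg ht _) (iSup_nonneg fun x => abs_nonneg _)
  · filter_upwards [eventually_gt_atTop (0:ℝ)] with t ht
    have hcJ : 0 ≤ (4 * π * t) ^ (-(N : ℝ) / 2) * J t :=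
      mul_nonneg (rpow_pos_of_pos (by positivity) _).le (hJ_nonneg t)
    have hsup : (⨆ x : EuclideanSpace ℝ (Fin N), |heatSol N u₀ x t - M * heatKernel N t x|)
        ≤ (4 * π * t) ^ (-(N : ℝ) / 2) * J t :=
      Real.iSup_le (fun x => key t ht x) hcJ
    calc t ^ ((N : ℝ) / 2) * ⨆ x : EuclideanSpace ℝ (Fin N),
          |heatSol N u₀ x t - M * heatKernel N t x|
        ≤ t ^ ((N : ℝ) / 2) * ((4 * π * t) ^ (-(N : ℝ) / 2) * J t) :=
          mul_le_mul_of_nonneg_left hsup (rpow_nonneg ht.le _)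
      _ = (4 * π) ^ (-(N : ℝ) / 2) * J t := by
          rw [Real.mul_rpow (by positivity) ht.le]
          rw [show t ^ ((N:ℝ)/2) * ((4*π) ^ (-(N:ℝ)/2) * t ^ (-(N:ℝ)/2) * J t)
            = (4*π) ^ (-(N:ℝ)/2) * (t ^ ((N:ℝ)/2) * t ^ (-(N:ℝ)/2)) * J t by ring]
          have hz : ((N:ℝ)/2 + -(N:ℝ)/2 : ℝ) = 0 := by ring
          rw [← Real.rpow_add ht, hz, Real.rpow_zero, mul_one]
  · have := hJ0.const_mul ((4 * π) ^ (-(N : ℝ) / 2))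
    simpa using this
end

section
/- Let N ≥ 1 and let u₀, v₀ ∈ L¹(ℝ^N) satisfy ∫_{ℝ^N} u₀(x) dx = ∫_{ℝ^N} v₀(x) dx. Let u(x,t) = ∫_{ℝ^N} G_t(x−y) u₀(y) dy and v(x,t) = ∫_{ℝ^N} G_t(x−y) v₀(y) dy be the corresponding solutions of the heat equation. Then ‖u(·,t) − v(·,t)‖_{L¹(ℝ^N)} → 0 as t → ∞. -/
open MeasureTheory Real Filter

namespace HeatAux

lemma hk_cont (N : ℕ) (t : ℝ) : Continuous (heatKernel N t) := by
  unfold heatKernel; fun_prop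

lemma hk_nonneg (N : ℕ) {t : ℝ} (ht : 0 < t) (x : EuclideanSpace ℝ (Fin N)) :
    0 ≤ heatKernel N t x := by
  unfold heatKernel
  have hπ := Real.pi_pos
  positivity

lemma hk_le (N : ℕ) {t : ℝ} (ht : 0 < t) (x : EuclideanSpace ℝ (Fin N)) :
    heatKernel N t x ≤ (4 * π * t) ^ (-(N : ℝ) / 2) := by
  unfold heatKernel
  have hπ := Real.pi_pos
  have h1 : Real.exp (-‖x‖ ^ 2 / (4 * t)) ≤ 1 := by
    rw [Real.exp_le_one_iff]
    have : (0:ℝ) ≤ ‖x‖ ^ 2 / (4 * t) := by positivity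
    linarith [this, neg_div (4*t) (‖x‖^2)]
  calc (4 * π * t) ^ (-(N : ℝ) / 2) * Real.exp (-‖x‖ ^ 2 / (4 * t))
      ≤ (4 * π * t) ^ (-(N : ℝ) / 2) * 1 := by
        apply mul_le_mul_of_nonneg_left h1; positivity
    _ = (4 * π * t) ^ (-(N : ℝ) / 2) := mul_one _

lemma gauss_int (N : ℕ) {b : ℝ} (hb : 0 < b) :
    Integrable (fun x : EuclideanSpace ℝ (Fin N) => Real.exp (-b * ‖x‖ ^ 2)) := by
  have h := GaussianFourier.integrable_cexp_neg_mul_sq_norm_add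
    (V := EuclideanSpace ℝ (Fin N)) (b := (b : ℂ)) (by simpa using hb) 0 0
  have h2 := h.norm
  simp only [Complex.norm_exp] at h2
  refine h2.congr (Filter.Eventually.of_forall fun x => ?_)
  norm_num
  exact Or.inl (by norm_cast)

lemma hk_int (N : ℕ) {t : ℝ} (ht : 0 < t) : Integrable (heatKernel N t) := by
  have hb : (0:ℝ) < 1 / (4 * t) := by positivity
  have hfun : heatKernel N t
      = fun x : EuclideanSpace ℝ (Fin N) =>
        (4 * π * t) ^ (-(N : ℝ) / 2) * rexp (-(1 / (4 * t)) * ‖x‖ ^ 2) := by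
    funext x
    unfold heatKernel
    congr 1
    congr 1
    ring
  rw [hfun]
  exact (gauss_int N hb).const_mul _

lemma hk_scale (N : ℕ) {t : ℝ} (ht : 0 < t) (w : EuclideanSpace ℝ (Fin N)) :
    heatKernel N t (Real.sqrt t • w) = t ^ (-(N : ℝ) / 2) * heatKernel N 1 w := by
  unfold heatKernel
  have hπ := Real.pi_pos
  have hn : ‖Real.sqrt t • w‖ ^ 2 = t * ‖w‖ ^ 2 := by
    rw [norm_smul, Real.norm_eq_abs, abs_of_nonneg (Real.sqrt_nonneg t), mul_pow,
      Real.sq_sqrt ht.le]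
  rw [hn]
  have hco : (4 * π * t) ^ (-(N : ℝ) / 2) = (4 * π) ^ (-(N : ℝ) / 2) * t ^ (-(N : ℝ) / 2) := by
    rw [Real.mul_rpow (by positivity) ht.le]
  have he : -(t * ‖w‖ ^ 2) / (4 * t) = -‖w‖ ^ 2 / (4 * 1) := by
    field_simp
  rw [hco, he, mul_one]
  ring

noncomputable def Dfun (N : ℕ) (t : ℝ) (y : EuclideanSpace ℝ (Fin N)) : ℝ :=
  ∫ x, |heatKernel N t (x - y) - heatKernel N t x|

lemma D_eq (N : ℕ) {t : ℝ} (ht : 0 < t) (y : EuclideanSpace ℝ (Fin N)) :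
    Dfun N t y
      = ∫ z, |heatKernel N 1 (z - (Real.sqrt t)⁻¹ • y) - heatKernel N 1 z| := by
  set R := Real.sqrt t with hRdef
  have hR : 0 < R := Real.sqrt_pos.2 ht
  have hc : (0:ℝ) < t ^ (-(N : ℝ) / 2) := Real.rpow_pos_of_pos ht _
  have key : ∀ z : EuclideanSpace ℝ (Fin N),
      |heatKernel N t (R • z - y) - heatKernel N t (R • z)|
        = t ^ (-(N : ℝ) / 2) * |heatKernel N 1 (z - R⁻¹ • y) - heatKernel N 1 z| := by
    intro z
    have h1 : R • z - y = R • (z - R⁻¹ • y) := by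
      rw [smul_sub, smul_inv_smul₀ hR.ne']
    rw [h1, hk_scale N ht, hk_scale N ht, ← mul_sub, abs_mul, abs_of_pos hc]
  have hs := MeasureTheory.Measure.integral_comp_smul_of_nonneg
    (volume : Measure (EuclideanSpace ℝ (Fin N)))
    (fun x => |heatKernel N t (x - y) - heatKernel N t x|) R (hR := hR.le)
  simp only [finrank_euclideanSpace_fin, smul_eq_mul] at hs
  have hs2 : ∫ z : EuclideanSpace ℝ (Fin N),
      |heatKernel N t (R • z - y) - heatKernel N t (R • z)|
      = (R ^ N)⁻¹ * Dfun N t y := hs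
  rw [funext key] at hs2
  rw [MeasureTheory.integral_const_mul] at hs2
  have hRN : (0:ℝ) < R ^ N := pow_pos hR N
  have hprod : R ^ N * t ^ (-(N : ℝ) / 2) = 1 := by
    have h1 : R ^ N = t ^ ((N : ℝ) / 2) := by
      rw [hRdef, Real.sqrt_eq_rpow, ← Real.rpow_natCast (t ^ ((1:ℝ)/2)) N,
        ← Real.rpow_mul ht.le]
      congr 1
      ring
    rw [h1, ← Real.rpow_add ht, show ((N:ℝ)/2 + -(N:ℝ)/2) = 0 by ring, Real.rpow_zero]
  have hD : Dfun N t y = R ^ N * (t ^ (-(N : ℝ) / 2) *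
      ∫ z, |heatKernel N 1 (z - R⁻¹ • y) - heatKernel N 1 z|) := by
    rw [hs2, ← mul_assoc, mul_inv_cancel₀ hRN.ne', one_mul]
  rw [hD, ← mul_assoc, hprod, one_mul]

lemma hk1_translate_int (N : ℕ) (a : EuclideanSpace ℝ (Fin N)) :
    Integrable (fun z : EuclideanSpace ℝ (Fin N) => heatKernel N 1 (z - a)) :=
  (hk_int N one_pos).comp_sub_right a

lemma D_le (N : ℕ) {t : ℝ} (ht : 0 < t) (y : EuclideanSpace ℝ (Fin N)) :
    Dfun N t y ≤ 2 * ∫ z, heatKernel N 1 z := by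
  rw [D_eq N ht y]
  set a := (Real.sqrt t)⁻¹ • y
  have h1 : Integrable (fun z : EuclideanSpace ℝ (Fin N) => heatKernel N 1 (z - a)) :=
    hk1_translate_int N a
  have h2 := hk_int N (one_pos : (0:ℝ) < 1)
  calc (∫ z, |heatKernel N 1 (z - a) - heatKernel N 1 z|)
      ≤ ∫ z, (heatKernel N 1 (z - a) + heatKernel N 1 z) := by
        refine MeasureTheory.integral_mono ((h1.sub h2).abs) (h1.add h2) fun z => ?_
        refine (abs_sub _ _).trans ?_
        rw [abs_of_nonneg (hk_nonneg N one_pos _), abs_of_nonneg (hk_nonneg N one_pos _)]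
    _ = (∫ z, heatKernel N 1 (z - a)) + ∫ z, heatKernel N 1 z :=
        MeasureTheory.integral_add h1 h2
    _ = 2 * ∫ z, heatKernel N 1 z := by
        rw [MeasureTheory.integral_sub_right_eq_self (heatKernel N 1) a]
        ring

lemma hk1_bound (N : ℕ) {a : EuclideanSpace ℝ (Fin N)} (ha : ‖a‖ ≤ 1)
    (z : EuclideanSpace ℝ (Fin N)) :
    heatKernel N 1 (z - a)
      ≤ (4 * π * 1) ^ (-(N : ℝ) / 2) * (Real.exp (1/4) * Real.exp (-(1/8) * ‖z‖ ^ 2)) := by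
  unfold heatKernel
  have hπ := Real.pi_pos
  rw [← Real.exp_add]
  refine mul_le_mul_of_nonneg_left ?_ (by positivity)
  rw [Real.exp_le_exp]
  have h1 : ‖z‖ ≤ ‖z - a‖ + 1 := by
    calc ‖z‖ = ‖(z - a) + a‖ := by rw [sub_add_cancel]
      _ ≤ ‖z - a‖ + ‖a‖ := norm_add_le _ _
      _ ≤ ‖z - a‖ + 1 := by linarith
  have h2 : ‖z‖ ^ 2 / 2 - 1 ≤ ‖z - a‖ ^ 2 := by
    nlinarith [norm_nonneg (z - a), norm_nonneg z, sq_nonneg (‖z - a‖ - 1)]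
  nlinarith [h2]

lemma D_tendsto (N : ℕ) (y : EuclideanSpace ℝ (Fin N)) :
    Tendsto (fun t => Dfun N t y) atTop (nhds 0) := by
  have hsqrtTop : Tendsto Real.sqrt atTop atTop := by
    refine (tendsto_rpow_atTop (by norm_num : (0:ℝ) < 1/2)).congr' ?_
    filter_upwards [eventually_ge_atTop (0:ℝ)] with t ht
    rw [Real.sqrt_eq_rpow]
  have hsq : Tendsto (fun t : ℝ => (Real.sqrt t)⁻¹) atTop (nhds 0) :=
    Filter.Tendsto.inv_tendsto_atTop hsqrtTop
  have ha : Tendsto (fun t : ℝ => (Real.sqrt t)⁻¹ • y) atTop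
      (nhds (0 : EuclideanSpace ℝ (Fin N))) := by
    have := hsq.smul_const y
    simpa using this
  set a : ℝ → EuclideanSpace ℝ (Fin N) := fun t => (Real.sqrt t)⁻¹ • y with ha_def
  have heq : (fun t => Dfun N t y)
      =ᶠ[atTop] fun t => ∫ z, |heatKernel N 1 (z - a t) - heatKernel N 1 z| := by
    filter_upwards [eventually_gt_atTop (0:ℝ)] with t ht
    exact D_eq N ht y
  rw [Filter.tendsto_congr' heq]
  have hzero : (0:ℝ) = ∫ z : EuclideanSpace ℝ (Fin N), (0:ℝ) := by simp
  rw [hzero]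
  refine MeasureTheory.tendsto_integral_filter_of_dominated_convergence
    (fun z => 2 * ((4 * π * 1) ^ (-(N : ℝ) / 2)
      * (Real.exp (1/4) * Real.exp (-(1/8) * ‖z‖ ^ 2)))) ?_ ?_ ?_ ?_
  · filter_upwards with t
    exact (((hk_cont N 1).comp (continuous_id.sub continuous_const)).sub
      (hk_cont N 1)).abs.aestronglyMeasurable
  · have hnorm : Tendsto (fun t : ℝ => ‖a t‖) atTop (nhds 0) := by
      simpa [Function.comp_def] using (continuous_norm.tendsto _).comp ha
    filter_upwards [hnorm.eventually_le_const (by norm_num : (0:ℝ) < 1)] with t hat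
    refine MeasureTheory.ae_of_all _ fun z => ?_
    rw [Real.norm_eq_abs, abs_abs]
    have hb1 := hk1_bound N hat z
    have hb2 : heatKernel N 1 z
        ≤ (4 * π * 1) ^ (-(N : ℝ) / 2) * (Real.exp (1/4) * Real.exp (-(1/8) * ‖z‖ ^ 2)) := by
      have := hk1_bound N (a := (0 : EuclideanSpace ℝ (Fin N))) (by simp) z
      simpa using this
    have h3 := hk_nonneg N one_pos (z - a t)
    have h4 := hk_nonneg N one_pos z
    refine (abs_sub _ _).trans ?_
    rw [abs_of_nonneg h3, abs_of_nonneg h4]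
    linarith
  · exact (((gauss_int N (by norm_num : (0:ℝ) < 1/8)).const_mul
      (Real.exp (1/4))).const_mul ((4 * π * 1) ^ (-(N : ℝ) / 2))).const_mul 2
  · refine MeasureTheory.ae_of_all _ fun z => ?_
    have hc : Continuous fun b : EuclideanSpace ℝ (Fin N) =>
        |heatKernel N 1 (z - b) - heatKernel N 1 z| :=
      (((hk_cont N 1).comp (continuous_const.sub continuous_id)).sub continuous_const).abs
    have := (hc.tendsto 0).comp ha
    simpa [Function.comp_def] using this

end HeatAux

open HeatAux

/-- Mixing property: two solutions of the heat equation whose initial data have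
the same mass approach each other in `L¹` as `t → ∞`. -/
theorem heat_mixing_L1 (N : ℕ) (hN : 1 ≤ N)
    (u₀ v₀ : EuclideanSpace ℝ (Fin N) → ℝ)
    (hu₀ : Integrable u₀) (hv₀ : Integrable v₀)
    (hmass : ∫ x, u₀ x = ∫ x, v₀ x) :
    Tendsto (fun t : ℝ => ∫ x, |heatSol N u₀ x t - heatSol N v₀ x t|)
      atTop (nhds 0) := by
  set w : EuclideanSpace ℝ (Fin N) → ℝ := fun y => u₀ y - v₀ y with hw_def
  have hw : Integrable w := hu₀.sub hv₀
  have hw0 : ∫ y, w y = 0 := by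
    simp only [hw_def]
    rw [MeasureTheory.integral_sub hu₀ hv₀, hmass, sub_self]
  set B : ℝ → ℝ := fun t => ∫ y, |w y| * Dfun N t y with hB_def
  have hBtend : Tendsto B atTop (nhds 0) := by
    have hzero : (0:ℝ) = ∫ y : EuclideanSpace ℝ (Fin N), (0:ℝ) := by simp
    rw [hB_def, hzero]
    refine MeasureTheory.tendsto_integral_filter_of_dominated_convergence
      (fun y => |w y| * (2 * ∫ z, heatKernel N 1 z)) ?_ ?_ ?_ ?_
    · filter_upwards with t
      have hcont : Continuous fun p : EuclideanSpace ℝ (Fin N) × EuclideanSpace ℝ (Fin N) =>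
          |heatKernel N t (p.1 - p.2) - heatKernel N t p.1| :=
        (((hk_cont N t).comp (continuous_fst.sub continuous_snd)).sub
          ((hk_cont N t).comp continuous_fst)).abs
      have hD : StronglyMeasurable fun y => Dfun N t y :=
        hcont.stronglyMeasurable.integral_prod_left'
      exact hw.abs.1.mul hD.aestronglyMeasurable
    · filter_upwards [eventually_gt_atTop (0:ℝ)] with t ht
      refine MeasureTheory.ae_of_all _ fun y => ?_
      rw [Real.norm_eq_abs, abs_mul, abs_abs]
      have hDnn : 0 ≤ Dfun N t y := MeasureTheory.integral_nonneg fun x => abs_nonneg _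
      rw [abs_of_nonneg hDnn]
      exact mul_le_mul_of_nonneg_left (D_le N ht y) (abs_nonneg _)
    · exact hw.abs.mul_const _
    · refine MeasureTheory.ae_of_all _ fun y => ?_
      have := (tendsto_const_nhds (x := |w y|)).mul (D_tendsto N y)
      simpa using this
  have hineq : ∀ᶠ t in atTop,
      (∫ x, |heatSol N u₀ x t - heatSol N v₀ x t|) ≤ B t := by
    filter_upwards [eventually_gt_atTop (0:ℝ)] with t ht
    set K := heatKernel N t with hK
    have hKc : Continuous K := hk_cont N t
    have hKint : Integrable K := hk_int N ht
    set f : (EuclideanSpace ℝ (Fin N) × EuclideanSpace ℝ (Fin N)) → ℝ :=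
      fun p => (K (p.1 - p.2) - K p.1) * w p.2 with hf_def
    have h1 : Integrable
        (fun p : EuclideanSpace ℝ (Fin N) × EuclideanSpace ℝ (Fin N) => K p.1 * w p.2)
        ((volume : Measure (EuclideanSpace ℝ (Fin N))).prod volume) := hKint.mul_prod hw
    have hshear : MeasurePreserving
        (fun p : EuclideanSpace ℝ (Fin N) × EuclideanSpace ℝ (Fin N) => (p.1 - p.2, p.2))
        ((volume : Measure (EuclideanSpace ℝ (Fin N))).prod volume)
        ((volume : Measure (EuclideanSpace ℝ (Fin N))).prod volume) :=
      measurePreserving_sub_prod volume volume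
    have h2 : Integrable
        (fun p : EuclideanSpace ℝ (Fin N) × EuclideanSpace ℝ (Fin N) => K (p.1 - p.2) * w p.2)
        ((volume : Measure (EuclideanSpace ℝ (Fin N))).prod volume) :=
      (hshear.integrable_comp h1.aestronglyMeasurable).mpr h1
    have hP : Integrable f ((volume : Measure (EuclideanSpace ℝ (Fin N))).prod volume) := by
      refine (h2.sub h1).congr (MeasureTheory.ae_of_all _ fun p => ?_)
      simp only [hf_def, hw_def, Pi.sub_apply]
      ring
    have hKb : ∀ z, ‖K z‖ ≤ (4 * π * t) ^ (-(N : ℝ) / 2) := fun z => by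
      rw [Real.norm_eq_abs, abs_of_nonneg (hk_nonneg N ht z)]
      exact hk_le N ht z
    have hid : ∀ x, heatSol N u₀ x t - heatSol N v₀ x t = ∫ y, f (x, y) := by
      intro x
      have hmeasx : AEStronglyMeasurable (fun y => K (x - y)) volume :=
        (hKc.comp (continuous_const.sub continuous_id)).aestronglyMeasurable
      have hbdd : ∀ᵐ y, ‖K (x - y)‖ ≤ (4 * π * t) ^ (-(N : ℝ) / 2) :=
          MeasureTheory.ae_of_all _ fun y => hKb (x - y)
      have hu : Integrable (fun y => K (x - y) * u₀ y) := hu₀.bdd_mul hmeasx hbdd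
      have hv : Integrable (fun y => K (x - y) * v₀ y) := hv₀.bdd_mul hmeasx hbdd
      have hwK : Integrable (fun y => K (x - y) * w y) := hw.bdd_mul hmeasx hbdd
      have hKx : Integrable (fun y => K x * w y) := hw.const_mul _
      have hfx : Integrable (fun y => f (x, y)) := by
        refine (hwK.sub hKx).congr (MeasureTheory.ae_of_all _ fun y => ?_)
        simp only [hf_def, hw_def, Pi.sub_apply]
        ring
      show (∫ y, K (x - y) * u₀ y) - (∫ y, K (x - y) * v₀ y) = _
      rw [← MeasureTheory.integral_sub hu hv]
      have e1 : ∀ y, K (x - y) * u₀ y - K (x - y) * v₀ y = f (x, y) + K x * w y := by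
        intro y
        simp only [hf_def, hw_def]
        ring
      simp only [e1]
      rw [MeasureTheory.integral_add hfx hKx, MeasureTheory.integral_const_mul, hw0,
        mul_zero, add_zero]
    have hg : Integrable (fun x => ∫ y, f (x, y)) := hP.integral_prod_left
    have hgn : Integrable (fun x => ∫ y, ‖f (x, y)‖) := hP.norm.integral_prod_left
    calc ∫ x, |heatSol N u₀ x t - heatSol N v₀ x t| = ∫ x, |∫ y, f (x, y)| := by
          simp only [hid]
      _ ≤ ∫ x, ∫ y, ‖f (x, y)‖ := by
          refine MeasureTheory.integral_mono hg.abs hgn fun x => ?_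
          rw [← Real.norm_eq_abs]
          exact norm_integral_le_integral_norm _
      _ = ∫ y, ∫ x, ‖f (x, y)‖ := MeasureTheory.integral_integral_swap hP.norm
      _ = B t := by
          rw [hB_def]
          refine MeasureTheory.integral_congr_ae (MeasureTheory.ae_of_all _ fun y => ?_)
          simp only [hf_def, Real.norm_eq_abs, abs_mul]
          rw [MeasureTheory.integral_mul_const]
          exact mul_comm _ _
  refine squeeze_zero' ?_ hineq hBtend
  filter_upwards with t
  exact MeasureTheory.integral_nonneg fun x => abs_nonneg _
end

section
/- Let N ≥ 1 and let u₀ ∈ L¹(ℝ^N) have finite first absolute moment 𝒩₁ = ∫_{ℝ^N} |y| |u₀(y)| dy < ∞. Let M = ∫_{ℝ^N} u₀(x) dx and u(x,t) = ∫_{ℝ^N} G_t(x−y) u₀(y) dy. Then there is a constant C > 0 depending only on N such that for all t > 0 and all x ∈ ℝ^N, |u(x,t) − M·G_t(x)| ≤ C·𝒩₁·t^{−(N+1)/2}. -/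
open MeasureTheory Real Filter

lemma deriv_bound (t : ℝ) (ht : 0 < t) (r : ℝ) :
    |exp (-r ^ 2 / (4 * t)) * (-(2 * r ^ 1) / (4 * t))| ≤ t ^ (-(1:ℝ)/2) := by
  have hu : 0 < Real.sqrt t := Real.sqrt_pos.mpr ht
  have hu2 : Real.sqrt t ^ 2 = t := Real.sq_sqrt ht.le
  have hrt : t ^ (-(1:ℝ)/2) = (Real.sqrt t)⁻¹ := by
    rw [show (-(1:ℝ)/2) = -(1/2) by ring, Real.rpow_neg ht.le, ← Real.sqrt_eq_rpow]
  have h4t : (0:ℝ) < 4 * t := by positivity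
  have h1 : |exp (-r ^ 2 / (4 * t)) * (-(2 * r ^ 1) / (4 * t))|
      = exp (-r ^ 2 / (4 * t)) * (|r| / (2 * t)) := by
    rw [abs_mul, abs_of_pos (Real.exp_pos _), abs_div, abs_neg, pow_one, abs_mul, abs_two,
      abs_of_pos h4t]
    ring
  have hexp : exp (-r ^ 2 / (4 * t)) ≤ (1 + r ^ 2 / (4 * t))⁻¹ := by
    rw [show -r^2/(4*t) = -(r^2/(4*t)) by ring, Real.exp_neg]
    apply inv_anti₀ (by positivity)
    have := Real.add_one_le_exp (r ^ 2 / (4 * t))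
    linarith
  rw [hrt, h1]
  calc exp (-r ^ 2 / (4 * t)) * (|r| / (2 * t))
      ≤ (1 + r ^ 2 / (4 * t))⁻¹ * (|r| / (2 * t)) :=
        mul_le_mul_of_nonneg_right hexp (by positivity)
    _ ≤ (Real.sqrt t)⁻¹ := by
        have hD : (0:ℝ) < (1 + r ^ 2 / (4 * t)) * (2 * t) := by positivity
        have heq : (1 + r ^ 2 / (4 * t))⁻¹ * (|r| / (2 * t))
            = |r| / ((1 + r ^ 2 / (4 * t)) * (2 * t)) := by
          field_simp
        have key : |r| * Real.sqrt t ≤ (1 + r ^ 2 / (4 * t)) * (2 * t) := by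
          have h2 : (1 + r ^ 2 / (4 * t)) * (2 * t) = 2 * t + r ^ 2 / 2 := by
            field_simp; ring
          rw [h2]
          nlinarith [sq_nonneg (|r| - Real.sqrt t), sq_abs r]
        rw [heq, div_le_iff₀ hD, inv_mul_eq_div, le_div_iff₀ hu]
        exact key

lemma exp_sq_lipschitz (t : ℝ) (ht : 0 < t) (a b : ℝ) :
    |exp (-a ^ 2 / (4 * t)) - exp (-b ^ 2 / (4 * t))| ≤ t ^ (-(1:ℝ)/2) * |a - b| := by
  set f : ℝ → ℝ := fun r => exp (-r ^ 2 / (4 * t)) with hf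
  have hd : ∀ r : ℝ, HasDerivAt f (exp (-r ^ 2 / (4 * t)) * (-(2 * r ^ 1) / (4 * t))) r := by
    intro r
    exact (((hasDerivAt_pow 2 r).neg.div_const (4 * t)).exp)
  have hdiff : Differentiable ℝ f := fun r => (hd r).differentiableAt
  have L : LipschitzWith (Real.toNNReal (t ^ (-(1:ℝ)/2))) f := by
    apply lipschitzWith_of_nnnorm_deriv_le hdiff
    intro r
    rw [← NNReal.coe_le_coe, coe_nnnorm, Real.coe_toNNReal _ (by positivity)]
    rw [(hd r).deriv]
    exact deriv_bound t ht r
  have := L.dist_le_mul a b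
  rw [Real.dist_eq, Real.dist_eq, Real.coe_toNNReal _ (by positivity)] at this
  exact this

lemma heatKernel_nonneg (N : ℕ) (t : ℝ) (ht : 0 < t) (x : EuclideanSpace ℝ (Fin N)) :
    0 ≤ heatKernel N t x := by
  unfold heatKernel
  have : (0:ℝ) < 4 * π * t := by positivity
  positivity

lemma heatKernel_le (N : ℕ) (t : ℝ) (ht : 0 < t) (x : EuclideanSpace ℝ (Fin N)) :
    heatKernel N t x ≤ (4 * π * t) ^ (-(N : ℝ) / 2) := by
  unfold heatKernel
  have h1 : exp (-‖x‖ ^ 2 / (4 * t)) ≤ 1 := by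
    apply Real.exp_le_one_iff.mpr
    rw [neg_div]
    exact neg_nonpos.mpr (by positivity)
  have h2 : (0:ℝ) ≤ (4 * π * t) ^ (-(N : ℝ) / 2) := by
    have : (0:ℝ) < 4 * π * t := by positivity
    positivity
  calc (4 * π * t) ^ (-(N : ℝ) / 2) * exp (-‖x‖ ^ 2 / (4 * t))
      ≤ (4 * π * t) ^ (-(N : ℝ) / 2) * 1 := mul_le_mul_of_nonneg_left h1 h2
    _ = _ := mul_one _

lemma heatKernel_continuous (N : ℕ) (t : ℝ) :
    Continuous (fun x : EuclideanSpace ℝ (Fin N) => heatKernel N t x) := by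
  unfold heatKernel
  fun_prop

lemma heatKernel_sub_le (N : ℕ) (t : ℝ) (ht : 0 < t) (x y : EuclideanSpace ℝ (Fin N)) :
    |heatKernel N t (x - y) - heatKernel N t x|
      ≤ (4 * π * t) ^ (-(N : ℝ) / 2) * (t ^ (-(1:ℝ)/2) * ‖y‖) := by
  unfold heatKernel
  rw [← mul_sub, abs_mul]
  have hc : (0:ℝ) < 4 * π * t := by positivity
  rw [abs_of_nonneg (by positivity : (0:ℝ) ≤ (4 * π * t) ^ (-(N : ℝ) / 2))]
  apply mul_le_mul_of_nonneg_left _ (by positivity)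
  calc |exp (-‖x - y‖ ^ 2 / (4 * t)) - exp (-‖x‖ ^ 2 / (4 * t))|
      ≤ t ^ (-(1:ℝ)/2) * |‖x - y‖ - ‖x‖| := exp_sq_lipschitz t ht _ _
    _ ≤ t ^ (-(1:ℝ)/2) * ‖y‖ := by
        apply mul_le_mul_of_nonneg_left _ (by positivity)
        calc |‖x - y‖ - ‖x‖| ≤ ‖(x - y) - x‖ := abs_norm_sub_norm_le _ _
          _ = ‖y‖ := by rw [sub_sub_cancel_left, norm_neg]

/-- Quantitative sup-norm convergence for data with finite first absolute moment:
`|u(x,t) − M·G_t(x)| ≤ C·𝒩₁·t^{-(N+1)/2}` with `C = C(N)`. -/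
theorem heat_convergence_rate_first_moment_sup (N : ℕ) (hN : 1 ≤ N) :
    ∃ C : ℝ, 0 < C ∧ ∀ u₀ : EuclideanSpace ℝ (Fin N) → ℝ,
      Integrable u₀ →
      Integrable (fun y => ‖y‖ * |u₀ y|) →
      ∀ t : ℝ, 0 < t → ∀ x : EuclideanSpace ℝ (Fin N),
        |heatSol N u₀ x t - (∫ y, u₀ y) * heatKernel N t x| ≤
          C * (∫ y, ‖y‖ * |u₀ y|) * t ^ (-((N : ℝ) + 1) / 2) := by
  refine ⟨(4 * π) ^ (-(N : ℝ) / 2), by positivity, ?_⟩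
  intro u₀ hu hmom t ht x
  have hc : (0:ℝ) < 4 * π * t := by positivity
  -- integrability of the convolution integrand
  have hmeas : AEStronglyMeasurable (fun y : EuclideanSpace ℝ (Fin N) => heatKernel N t (x - y))
      (volume) :=
    ((heatKernel_continuous N t).comp (continuous_const.sub continuous_id)).aestronglyMeasurable
  have hbd : ∀ y : EuclideanSpace ℝ (Fin N), ‖heatKernel N t (x - y)‖ ≤ (4 * π * t) ^ (-(N : ℝ) / 2) := by
    intro y
    rw [Real.norm_eq_abs, abs_of_nonneg (heatKernel_nonneg N t ht _)]
    exact heatKernel_le N t ht _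
  have hint1 : Integrable (fun y => heatKernel N t (x - y) * u₀ y) :=
    hu.bdd_mul hmeas (Filter.Eventually.of_forall hbd)
  have hint2 : Integrable (fun y => heatKernel N t x * u₀ y) := hu.const_mul _
  -- rewrite the difference as one integral
  have hs : heatSol N u₀ x t - (∫ y, u₀ y) * heatKernel N t x
      = ∫ y, (heatKernel N t (x - y) - heatKernel N t x) * u₀ y := by
    simp only [heatSol, sub_mul]
    rw [integral_sub hint1 hint2, integral_const_mul, mul_comm]
  rw [hs]
  -- bound the integral
  have hptb : ∀ y : EuclideanSpace ℝ (Fin N),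
      ‖(heatKernel N t (x - y) - heatKernel N t x) * u₀ y‖
        ≤ (4 * π * t) ^ (-(N : ℝ) / 2) * t ^ (-(1:ℝ)/2) * (‖y‖ * |u₀ y|) := by
    intro y
    rw [norm_mul, Real.norm_eq_abs, Real.norm_eq_abs]
    calc |heatKernel N t (x - y) - heatKernel N t x| * |u₀ y|
        ≤ ((4 * π * t) ^ (-(N : ℝ) / 2) * (t ^ (-(1:ℝ)/2) * ‖y‖)) * |u₀ y| :=
          mul_le_mul_of_nonneg_right (heatKernel_sub_le N t ht x y) (abs_nonneg _)
      _ = (4 * π * t) ^ (-(N : ℝ) / 2) * t ^ (-(1:ℝ)/2) * (‖y‖ * |u₀ y|) := by ring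
  have hIbound : |∫ y, (heatKernel N t (x - y) - heatKernel N t x) * u₀ y|
      ≤ (4 * π * t) ^ (-(N : ℝ) / 2) * t ^ (-(1:ℝ)/2) * (∫ y, ‖y‖ * |u₀ y|) := by
    rw [← Real.norm_eq_abs, ← integral_const_mul]
    apply norm_integral_le_of_norm_le (hmom.const_mul _)
    exact Filter.Eventually.of_forall hptb
  refine hIbound.trans (le_of_eq ?_)
  -- algebra with rpow
  have h1 : (4 * π * t) ^ (-(N : ℝ) / 2) = (4 * π) ^ (-(N : ℝ) / 2) * t ^ (-(N : ℝ) / 2) := by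
    rw [Real.mul_rpow (by positivity) ht.le]
  have h2 : t ^ (-(N : ℝ) / 2) * t ^ (-(1:ℝ)/2) = t ^ (-((N : ℝ) + 1) / 2) := by
    rw [← Real.rpow_add ht]
    ring_nf
  rw [h1]
  calc (4 * π) ^ (-(N : ℝ) / 2) * t ^ (-(N : ℝ) / 2) * t ^ (-(1:ℝ)/2) * (∫ y, ‖y‖ * |u₀ y|)
      = (4 * π) ^ (-(N : ℝ) / 2) * (t ^ (-(N : ℝ) / 2) * t ^ (-(1:ℝ)/2)) * (∫ y, ‖y‖ * |u₀ y|) := by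
        ring
    _ = (4 * π) ^ (-(N : ℝ) / 2) * (∫ y, ‖y‖ * |u₀ y|) * t ^ (-((N : ℝ) + 1) / 2) := by
        rw [h2]; ring
end

section
/- Let N ≥ 1, let R > 0, x_c ∈ ℝ^N, and let u₀ ∈ L¹(ℝ^N) satisfy u₀ ≥ 0, u₀ = 0 almost everywhere outside the closed ball B_R(x_c), and M = ∫_{ℝ^N} u₀(x) dx > 0. Let u(x,t) = ∫_{ℝ^N} G_t(x−y) u₀(y) dy. Then for every fixed t > 0, log(u(x,t)/M)/|x|² → −1/(4t) as |x| → ∞. -/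
open MeasureTheory Real Filter

/-- Asymptotic shape of the tail: for compactly supported nonnegative data,
`log(u(x,t)/M)/|x|² → −1/(4t)` as `|x| → ∞`, for every fixed `t > 0`. -/
theorem heat_gaussian_tail_limit (N : ℕ) (hN : 1 ≤ N) (R : ℝ) (hR : 0 < R)
    (xc : EuclideanSpace ℝ (Fin N)) (u₀ : EuclideanSpace ℝ (Fin N) → ℝ)
    (hu₀ : Integrable u₀) (hpos : ∀ y, 0 ≤ u₀ y)
    (hsupp : ∀ᵐ y, y ∉ Metric.closedBall xc R → u₀ y = 0)
    (M : ℝ) (hM : M = ∫ y, u₀ y) (hMpos : 0 < M)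
    (t : ℝ) (ht : 0 < t) :
    Tendsto (fun x : EuclideanSpace ℝ (Fin N) =>
        log (heatSol N u₀ x t / M) / ‖x‖ ^ 2)
      (Filter.comap (fun x : EuclideanSpace ℝ (Fin N) => ‖x‖) atTop)
      (nhds (-1 / (4 * t))) := by
  have ht' : (0:ℝ) < 4 * t := by linarith
  set c : ℝ := ‖xc‖ + R with hc
  have hc0 : 0 < c := by positivity
  set C : ℝ := (4 * π * t) ^ (-(N : ℝ) / 2) with hCdef
  have hC0 : 0 < C := by
    apply Real.rpow_pos_of_pos
    have := Real.pi_pos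
    positivity
  -- integrability of the integrand
  have hint : ∀ x : EuclideanSpace ℝ (Fin N),
      Integrable (fun y => exp (-‖x - y‖ ^ 2 / (4 * t)) * u₀ y) := by
    intro x
    apply hu₀.bdd_mul (c := 1)
    · apply Continuous.aestronglyMeasurable
      continuity
    · refine Filter.Eventually.of_forall (fun y => ?_)
      rw [Real.norm_eq_abs, abs_of_nonneg (exp_nonneg _)]
      apply Real.exp_le_one_iff.mpr
      rw [neg_div]
      have : (0:ℝ) ≤ ‖x - y‖ ^ 2 / (4 * t) := by positivity
      linarith
  -- rewrite heatSol
  have hsol : ∀ x : EuclideanSpace ℝ (Fin N),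
      heatSol N u₀ x t = C * ∫ y, exp (-‖x - y‖ ^ 2 / (4 * t)) * u₀ y := by
    intro x
    rw [heatSol, ← integral_const_mul]
    congr 1
    funext y
    rw [heatKernel]
    ring
  -- lower bound on the integral
  have hlow : ∀ x : EuclideanSpace ℝ (Fin N),
      exp (-(‖x - xc‖ + R) ^ 2 / (4 * t)) * M ≤
        ∫ y, exp (-‖x - y‖ ^ 2 / (4 * t)) * u₀ y := by
    intro x
    rw [hM, ← integral_const_mul]
    apply integral_mono_ae (hu₀.const_mul _) (hint x)
    filter_upwards [hsupp] with y hy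
    by_cases h : y ∈ Metric.closedBall xc R
    · apply mul_le_mul_of_nonneg_right _ (hpos y)
      apply Real.exp_le_exp.mpr
      have hxy : ‖x - y‖ ≤ ‖x - xc‖ + R := by
        have h1 : ‖x - y‖ ≤ ‖x - xc‖ + ‖xc - y‖ := by
          have he : x - y = (x - xc) + (xc - y) := by abel
          rw [he]; exact norm_add_le _ _
        have h2 : ‖xc - y‖ ≤ R := by
          rw [Metric.mem_closedBall, dist_comm] at h
          rw [← dist_eq_norm]; exact h
        linarith
      have hsq : ‖x - y‖ ^ 2 ≤ (‖x - xc‖ + R) ^ 2 :=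
        pow_le_pow_left₀ (norm_nonneg _) hxy 2
      rw [neg_div, neg_div, neg_le_neg_iff]
      exact (div_le_div_iff_of_pos_right ht').mpr hsq
    · simp [hy h]
  -- upper bound on the integral when far
  have hupp : ∀ x : EuclideanSpace ℝ (Fin N), R ≤ ‖x - xc‖ →
      (∫ y, exp (-‖x - y‖ ^ 2 / (4 * t)) * u₀ y) ≤
        exp (-(‖x - xc‖ - R) ^ 2 / (4 * t)) * M := by
    intro x hx
    rw [hM, ← integral_const_mul]
    apply integral_mono_ae (hint x) (hu₀.const_mul _)
    filter_upwards [hsupp] with y hy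
    by_cases h : y ∈ Metric.closedBall xc R
    · apply mul_le_mul_of_nonneg_right _ (hpos y)
      apply Real.exp_le_exp.mpr
      have hxy : ‖x - xc‖ - R ≤ ‖x - y‖ := by
        have h1 : ‖x - xc‖ ≤ ‖x - y‖ + ‖y - xc‖ := by
          have he : x - xc = (x - y) + (y - xc) := by abel
          rw [he]; exact norm_add_le _ _
        have h2 : ‖y - xc‖ ≤ R := by
          rw [Metric.mem_closedBall] at h
          rw [← dist_eq_norm]; exact h
        linarith
      have hsq : (‖x - xc‖ - R) ^ 2 ≤ ‖x - y‖ ^ 2 :=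
        pow_le_pow_left₀ (by linarith) hxy 2
      rw [neg_div, neg_div, neg_le_neg_iff]
      exact (div_le_div_iff_of_pos_right ht').mpr hsq
    · simp [hy h]
  -- limit functions of the scalar variable
  set gLo : ℝ → ℝ := fun s => Real.log C * s ^ 2 - (1 + c * s) ^ 2 / (4 * t) with hgLo
  set gHi : ℝ → ℝ := fun s => Real.log C * s ^ 2 - (1 - c * s) ^ 2 / (4 * t) with hgHi
  have hgcLo : Continuous gLo := by fun_prop
  have hgcHi : Continuous gHi := by fun_prop
  have hg0Lo : gLo 0 = -1 / (4 * t) := by simp [hgLo]; ring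
  have hg0Hi : gHi 0 = -1 / (4 * t) := by simp [hgHi]; ring
  set fLo : ℝ → ℝ := fun n => Real.log C / n ^ 2 - (n + c) ^ 2 / (4 * t * n ^ 2) with hfLo
  set fHi : ℝ → ℝ := fun n => Real.log C / n ^ 2 - (n - c) ^ 2 / (4 * t * n ^ 2) with hfHi
  have hftLo : Tendsto fLo atTop (nhds (-1 / (4 * t))) := by
    rw [← hg0Lo]
    apply Tendsto.congr' _ ((hgcLo.tendsto 0).comp tendsto_inv_atTop_zero)
    filter_upwards [eventually_gt_atTop (0:ℝ)] with n hn
    simp only [Function.comp, hgLo, hfLo]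
    field_simp
  have hftHi : Tendsto fHi atTop (nhds (-1 / (4 * t))) := by
    rw [← hg0Hi]
    apply Tendsto.congr' _ ((hgcHi.tendsto 0).comp tendsto_inv_atTop_zero)
    filter_upwards [eventually_gt_atTop (0:ℝ)] with n hn
    simp only [Function.comp, hgHi, hfHi]
    field_simp
  -- push through comap
  have hcomap : Tendsto (fun x : EuclideanSpace ℝ (Fin N) => ‖x‖)
      (Filter.comap (fun x : EuclideanSpace ℝ (Fin N) => ‖x‖) atTop) atTop :=
    tendsto_comap
  apply tendsto_of_tendsto_of_tendsto_of_le_of_le' (hftLo.comp hcomap) (hftHi.comp hcomap)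
  · -- lower eventual bound
    filter_upwards [hcomap.eventually (eventually_ge_atTop (c + 1))] with x hx
    have hn0 : (0:ℝ) < ‖x‖ := by linarith
    have hD1 : ‖x - xc‖ ≤ ‖x‖ + ‖xc‖ := norm_sub_le _ _
    have hlog : Real.log C - (‖x - xc‖ + R) ^ 2 / (4 * t) ≤ log (heatSol N u₀ x t / M) := by
      have h1 : C * exp (-(‖x - xc‖ + R) ^ 2 / (4 * t)) ≤ heatSol N u₀ x t / M := by
        rw [le_div_iff₀ hMpos, hsol x]
        calc C * exp (-(‖x - xc‖ + R) ^ 2 / (4 * t)) * M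
            = C * (exp (-(‖x - xc‖ + R) ^ 2 / (4 * t)) * M) := by ring
          _ ≤ C * ∫ y, exp (-‖x - y‖ ^ 2 / (4 * t)) * u₀ y :=
              mul_le_mul_of_nonneg_left (hlow x) hC0.le
      have h2 : (0:ℝ) < C * exp (-(‖x - xc‖ + R) ^ 2 / (4 * t)) := by positivity
      calc Real.log C - (‖x - xc‖ + R) ^ 2 / (4 * t)
          = Real.log (C * exp (-(‖x - xc‖ + R) ^ 2 / (4 * t))) := by
            rw [Real.log_mul hC0.ne' (exp_ne_zero _), Real.log_exp]; ring
        _ ≤ log (heatSol N u₀ x t / M) := Real.log_le_log h2 h1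
    have hsq : (‖x - xc‖ + R) ^ 2 ≤ (‖x‖ + c) ^ 2 := by
      apply pow_le_pow_left₀ (by positivity)
      rw [hc]; linarith
    show fLo ‖x‖ ≤ _
    have heq : fLo ‖x‖ = (Real.log C - (‖x‖ + c) ^ 2 / (4 * t)) / ‖x‖ ^ 2 := by
      rw [hfLo]; field_simp
    rw [heq]
    have hstep : Real.log C - (‖x‖ + c) ^ 2 / (4 * t) ≤ log (heatSol N u₀ x t / M) := by
      have := (div_le_div_iff_of_pos_right ht').mpr hsq
      linarith
    exact (div_le_div_iff_of_pos_right (by positivity)).mpr hstep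
  · -- upper eventual bound
    filter_upwards [hcomap.eventually (eventually_ge_atTop (c + 1))] with x hx
    have hn0 : (0:ℝ) < ‖x‖ := by linarith
    have hD2 : ‖x‖ - ‖xc‖ ≤ ‖x - xc‖ := norm_sub_norm_le x xc
    have hxfar : R ≤ ‖x - xc‖ := by rw [hc] at hx; linarith
    have hlog : log (heatSol N u₀ x t / M) ≤ Real.log C - (‖x - xc‖ - R) ^ 2 / (4 * t) := by
      have h1 : heatSol N u₀ x t / M ≤ C * exp (-(‖x - xc‖ - R) ^ 2 / (4 * t)) := by
        rw [div_le_iff₀ hMpos, hsol x]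
        calc C * ∫ y, exp (-‖x - y‖ ^ 2 / (4 * t)) * u₀ y
            ≤ C * (exp (-(‖x - xc‖ - R) ^ 2 / (4 * t)) * M) :=
              mul_le_mul_of_nonneg_left (hupp x hxfar) hC0.le
          _ = C * exp (-(‖x - xc‖ - R) ^ 2 / (4 * t)) * M := by ring
      have h2 : (0:ℝ) < heatSol N u₀ x t / M := by
        have h3 : (0:ℝ) < C * exp (-(‖x - xc‖ + R) ^ 2 / (4 * t)) := by positivity
        have h4 : C * exp (-(‖x - xc‖ + R) ^ 2 / (4 * t)) ≤ heatSol N u₀ x t / M := by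
          rw [le_div_iff₀ hMpos, hsol x]
          calc C * exp (-(‖x - xc‖ + R) ^ 2 / (4 * t)) * M
              = C * (exp (-(‖x - xc‖ + R) ^ 2 / (4 * t)) * M) := by ring
            _ ≤ C * ∫ y, exp (-‖x - y‖ ^ 2 / (4 * t)) * u₀ y :=
                mul_le_mul_of_nonneg_left (hlow x) hC0.le
        linarith
      calc log (heatSol N u₀ x t / M)
          ≤ Real.log (C * exp (-(‖x - xc‖ - R) ^ 2 / (4 * t))) := Real.log_le_log h2 h1
        _ = Real.log C - (‖x - xc‖ - R) ^ 2 / (4 * t) := by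
            rw [Real.log_mul hC0.ne' (exp_ne_zero _), Real.log_exp]; ring
    have hsq : (‖x‖ - c) ^ 2 ≤ (‖x - xc‖ - R) ^ 2 := by
      apply pow_le_pow_left₀ (by rw [hc] at hx ⊢; linarith)
      rw [hc]; linarith
    show _ ≤ fHi ‖x‖
    have heq : fHi ‖x‖ = (Real.log C - (‖x‖ - c) ^ 2 / (4 * t)) / ‖x‖ ^ 2 := by
      rw [hfHi]; field_simp
    rw [heq]
    have hstep : log (heatSol N u₀ x t / M) ≤ Real.log C - (‖x‖ - c) ^ 2 / (4 * t) := by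
      have := (div_le_div_iff_of_pos_right ht').mpr hsq
      linarith
    exact (div_le_div_iff_of_pos_right (by positivity)).mpr hstep
end

section
/- Let N ≥ 1 and let u₀ ∈ L¹(ℝ^N) have finite second absolute moment 𝒩₂ = ∫_{ℝ^N} |y|² |u₀(y)| dy < ∞. Let M = ∫_{ℝ^N} u₀(x) dx, let 𝒩_{1,i} = ∫_{ℝ^N} y_i u₀(y) dy for i = 1,…,N, and let u(x,t) = ∫_{ℝ^N} G_t(x−y) u₀(y) dy. Then there is a constant C > 0 depending only on N such that for all t > 0 and all x ∈ ℝ^N, |u(x,t) − M·G_t(x) + Σᵢ 𝒩_{1,i} ∂_{x_i} G_t(x)| ≤ C·𝒩₂·t^{−(N+2)/2}. -/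
open MeasureTheory Real Filter
open scoped RealInnerProductSpace

lemma heatKernel_taylor (N : ℕ) {t : ℝ} (ht : 0 < t) (x y : EuclideanSpace ℝ (Fin N)) :
    |heatKernel N t (x - y) - heatKernel N t x - ⟪x, y⟫ / (2 * t) * heatKernel N t x|
      ≤ 3 / 2 * (4 * π) ^ (-(N : ℝ) / 2) * t ^ (-((N : ℝ) + 2) / 2) * ‖y‖ ^ 2 := by
  set c : ℝ := (4 * π * t) ^ (-(N : ℝ) / 2) with hc
  have hcpos : 0 < c := rpow_pos_of_pos (by positivity) _
  have ht' : t ≠ 0 := ne_of_gt ht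
  set a : ℝ := ‖x‖ ^ 2 with ha
  set b : ℝ := ⟪x, y⟫ with hb
  set e : ℝ := ‖y‖ ^ 2 with he
  have hepos : 0 ≤ e := by positivity
  set R : ℝ → ℝ := fun s => a - 2 * s * b + s ^ 2 * e with hRdef
  have hR : ∀ s : ℝ, R s = ‖x - s • y‖ ^ 2 := by
    intro s
    have h1 : ‖x - s • y‖ ^ 2 = ‖x‖ ^ 2 - 2 * ⟪x, s • y⟫ + ‖s • y‖ ^ 2 :=
      norm_sub_sq_real x (s • y)
    have h2 : ⟪x, s • y⟫ = s * b := real_inner_smul_right x y s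
    have h3 : ‖s • y‖ ^ 2 = s ^ 2 * e := by
      rw [norm_smul]; simp [he, mul_pow, sq_abs]
    rw [h1, h2, h3]; ring
  have hR0 : ∀ s : ℝ, 0 ≤ R s := fun s => (hR s) ▸ (by positivity)
  set φ : ℝ → ℝ := fun s => c * Real.exp (-(R s) / (4 * t)) with hφdef
  set p : ℝ → ℝ := fun s => (2 * b - 2 * s * e) / (4 * t) with hpdef
  have hφ1 : φ 1 = heatKernel N t (x - y) := by
    have : R 1 = ‖x - y‖ ^ 2 := by rw [hR 1, one_smul]
    simp only [hφdef, heatKernel, this, hc]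
  have hφzero : φ 0 = heatKernel N t x := by
    have : R 0 = ‖x‖ ^ 2 := by rw [hR 0, zero_smul, sub_zero]
    simp only [hφdef, heatKernel, this, hc]
  -- derivatives
  have hRd : ∀ s : ℝ, HasDerivAt R (-(2 * b) + 2 * s * e) s := by
    intro s
    have h1 : HasDerivAt (fun s : ℝ => 2 * s * b) (2 * b) s := by
      simpa [mul_comm, mul_assoc] using (hasDerivAt_id s).const_mul (2 * b)
    have h2 : HasDerivAt (fun s : ℝ => s ^ 2 * e) (2 * s * e) s := by
      simpa [mul_comm, mul_assoc] using (hasDerivAt_pow 2 s).mul_const e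
    have := ((hasDerivAt_const s a).sub h1).add h2
    rw [zero_sub] at this
    exact this
  have hqd : ∀ s : ℝ, HasDerivAt (fun s => -(R s) / (4 * t)) (p s) s := by
    intro s
    have := ((hRd s).neg).div_const (4 * t)
    have hps : p s = -(-(2 * b) + 2 * s * e) / (4 * t) := by
      simp only [hpdef]; ring
    rw [hps]
    exact this
  have hφd : ∀ s : ℝ, HasDerivAt φ (φ s * p s) s := by
    intro s
    have := ((hqd s).exp).const_mul c
    simpa [hφdef, mul_assoc] using this
  have hpd : ∀ s : ℝ, HasDerivAt p (-(2 * e) / (4 * t)) s := by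
    intro s
    have h1 : HasDerivAt (fun s : ℝ => 2 * b - 2 * s * e) (-(2 * e)) s := by
      have : HasDerivAt (fun s : ℝ => 2 * s * e) (2 * e) s := by
        simpa [mul_comm, mul_assoc] using (hasDerivAt_id s).const_mul (2 * e)
      have := (hasDerivAt_const s (2 * b)).sub this
      rw [zero_sub] at this
      exact this
    exact h1.div_const (4 * t)
  have hφ'd : ∀ s : ℝ, HasDerivAt (fun s => φ s * p s) (φ s * (p s ^ 2 - e / (2 * t))) s := by
    intro s
    have := (hφd s).mul (hpd s)
    have hq : φ s * (p s ^ 2 - e / (2 * t)) = φ s * p s * p s + φ s * (-(2 * e) / (4 * t)) := by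
      ring
    rw [hq]
    exact this
  -- bound on the second derivative
  set K : ℝ := 3 / 2 * (c / t) * e with hK
  have hKbound : ∀ s : ℝ, |φ s * (p s ^ 2 - e / (2 * t))| ≤ K := by
    intro s
    set u : ℝ := R s / (4 * t) with hu
    have hu0 : 0 ≤ u := div_nonneg (hR0 s) (by positivity)
    have hexp : Real.exp (-(R s) / (4 * t)) = Real.exp (-u) := by
      rw [hu]; ring_nf
    have hφpos : 0 < φ s := mul_pos hcpos (Real.exp_pos _)
    -- Cauchy–Schwarz : (b - s e)^2 ≤ R s * e
    have hcs : (b - s * e) ^ 2 ≤ R s * e := by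
      have h1 : ⟪x - s • y, y⟫ = b - s * e := by
        rw [inner_sub_left, real_inner_smul_left, real_inner_self_eq_norm_sq]
      have h2 := real_inner_mul_inner_self_le (x - s • y) y
      rw [h1, real_inner_self_eq_norm_sq, real_inner_self_eq_norm_sq, ← hR s] at h2
      calc (b - s * e) ^ 2 = (b - s * e) * (b - s * e) := sq _
        _ ≤ R s * ‖y‖ ^ 2 := h2
        _ = R s * e := by rw [he]
    have hps : p s ^ 2 ≤ u * e / t := by
      have h0 : p s ^ 2 = (b - s * e) ^ 2 / (4 * t ^ 2) := by
        rw [hpdef]; field_simp; ring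
      calc p s ^ 2 = (b - s * e) ^ 2 / (4 * t ^ 2) := h0
        _ ≤ (R s * e) / (4 * t ^ 2) := by
            have := mul_le_mul_of_nonneg_right hcs
              (by positivity : (0:ℝ) ≤ (4 * t ^ 2)⁻¹)
            simpa [div_eq_mul_inv] using this
        _ = u * e / t := by
            rw [hu, div_mul_eq_mul_div, div_div]
            congr 1
            ring
    have hue : Real.exp (-u) * u ≤ 1 := by
      have h1 : u ≤ Real.exp u := le_trans (by linarith) (Real.add_one_le_exp u)
      rw [Real.exp_neg, inv_mul_le_iff₀ (Real.exp_pos u)]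
      simpa using h1
    have hexple : Real.exp (-u) ≤ 1 := Real.exp_le_one_iff.mpr (by linarith)
    have habs : |p s ^ 2 - e / (2 * t)| ≤ u * e / t + e / (2 * t) := by
      rw [abs_le]
      have h1 : 0 ≤ p s ^ 2 := sq_nonneg _
      have h2 : (0:ℝ) ≤ e / (2 * t) := by positivity
      have h3 : (0:ℝ) ≤ u * e / t := by positivity
      constructor <;> linarith [hps]
    calc |φ s * (p s ^ 2 - e / (2 * t))| = φ s * |p s ^ 2 - e / (2 * t)| := by
          rw [abs_mul, abs_of_pos hφpos]
      _ ≤ φ s * (u * e / t + e / (2 * t)) := by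
          apply mul_le_mul_of_nonneg_left habs hφpos.le
      _ = c * (Real.exp (-u) * u * (e / t) + Real.exp (-u) * (e / (2 * t))) := by
          rw [hφdef]; simp only [hexp]; ring
      _ ≤ c * (1 * (e / t) + 1 * (e / (2 * t))) := by
          have h1 : (0:ℝ) ≤ e / t := by positivity
          have h2 : (0:ℝ) ≤ e / (2 * t) := by positivity
          exact mul_le_mul_of_nonneg_left
            (add_le_add (mul_le_mul_of_nonneg_right hue h1)
              (mul_le_mul_of_nonneg_right hexple h2)) hcpos.le
      _ = K := by rw [hK]; field_simp; ring
  have hKpos : 0 ≤ K := le_trans (abs_nonneg _) (hKbound 0)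
  -- first MVT: |φ' s - φ' 0| ≤ K for s ∈ [0,1]
  have hmvt1 : ∀ s ∈ Set.Icc (0:ℝ) 1, |φ s * p s - φ 0 * p 0| ≤ K := by
    intro s hs
    have := (convex_Icc (0:ℝ) 1).norm_image_sub_le_of_norm_hasDerivWithin_le
      (f := fun s => φ s * p s) (f' := fun s => φ s * (p s ^ 2 - e / (2 * t)))
      (fun z _ => (hφ'd z).hasDerivWithinAt) (fun z _ => hKbound z)
      (Set.left_mem_Icc.mpr zero_le_one) hs
    simp only [Real.norm_eq_abs, sub_zero] at this
    calc |φ s * p s - φ 0 * p 0| ≤ K * |s| := this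
      _ ≤ K * 1 := by
          apply mul_le_mul_of_nonneg_left _ hKpos
          rw [abs_of_nonneg hs.1]; exact hs.2
      _ = K := mul_one K
  -- second MVT
  have hg : ∀ s : ℝ, HasDerivAt (fun s => φ s - s * (φ 0 * p 0)) (φ s * p s - φ 0 * p 0) s := by
    intro s
    have h1 : HasDerivAt (fun s : ℝ => s * (φ 0 * p 0)) (φ 0 * p 0) s := by
      simpa using (hasDerivAt_id s).mul_const (φ 0 * p 0)
    exact (hφd s).sub h1
  have hmvt2 : |φ 1 - 1 * (φ 0 * p 0) - (φ 0 - 0 * (φ 0 * p 0))| ≤ K * ‖(1:ℝ) - 0‖ := by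
    exact (convex_Icc (0:ℝ) 1).norm_image_sub_le_of_norm_hasDerivWithin_le
      (fun z hz => (hg z).hasDerivWithinAt) (fun z hz => hmvt1 z hz)
      (Set.left_mem_Icc.mpr zero_le_one) (Set.right_mem_Icc.mpr zero_le_one)
  have hfinal : |φ 1 - φ 0 - φ 0 * p 0| ≤ K := by
    have h : |φ 1 - φ 0 * p 0 - φ 0| ≤ K := by simpa using hmvt2
    have heq : φ 1 - φ 0 - φ 0 * p 0 = φ 1 - φ 0 * p 0 - φ 0 := by ring
    rwa [heq]
  -- identify terms
  rw [hφ1, hφzero] at hfinal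
  have hp0 : heatKernel N t x * p 0 = b / (2 * t) * heatKernel N t x := by
    have hpz : p 0 = b / (2 * t) := by
      simp only [hpdef]; field_simp; ring
    rw [hpz]; ring
  rw [hp0] at hfinal
  refine le_trans hfinal ?_
  -- K = 3/2 * (c/t) * e ≤ RHS (with equality)
  have hct : c / t = (4 * π) ^ (-(N : ℝ) / 2) * t ^ (-((N : ℝ) + 2) / 2) := by
    rw [hc, Real.mul_rpow (by positivity) ht.le]
    rw [div_eq_mul_inv, mul_assoc]
    congr 1
    rw [← Real.rpow_neg_one t, ← Real.rpow_add ht]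
    congr 1
    ring
  rw [hK, hct, he]
  apply le_of_eq
  ring

/-- Second-order sup-norm asymptotics: for data with finite second absolute moment,
`|u(x,t) − M·G_t(x) + Σᵢ 𝒩_{1,i} ∂_{x_i}G_t(x)| ≤ C·𝒩₂·t^{-(N+2)/2}` with `C = C(N)`,
where `∂_{x_i}G_t(x) = -(x_i/(2t))·G_t(x)`. -/
theorem heat_convergence_rate_second_moment_sup (N : ℕ) (hN : 1 ≤ N) :
    ∃ C : ℝ, 0 < C ∧ ∀ u₀ : EuclideanSpace ℝ (Fin N) → ℝ,
      Integrable u₀ →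
      Integrable (fun y => ‖y‖ ^ 2 * |u₀ y|) →
      ∀ t : ℝ, 0 < t → ∀ x : EuclideanSpace ℝ (Fin N),
        |heatSol N u₀ x t - (∫ y, u₀ y) * heatKernel N t x +
            ∑ i : Fin N, (∫ y : EuclideanSpace ℝ (Fin N), y i * u₀ y) *
              (-(x i / (2 * t)) * heatKernel N t x)| ≤
          C * (∫ y, ‖y‖ ^ 2 * |u₀ y|) * t ^ (-((N : ℝ) + 2) / 2) := by
  refine ⟨3 / 2 * (4 * π) ^ (-(N : ℝ) / 2), by positivity, ?_⟩
  intro u₀ hu h2 t ht x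
  set G : EuclideanSpace ℝ (Fin N) → ℝ := heatKernel N t with hG
  set T : EuclideanSpace ℝ (Fin N) → ℝ :=
    fun y => G (x - y) - G x - ⟪x, y⟫ / (2 * t) * G x with hT
  -- integrability facts
  have hGcont : Continuous G := by
    simp only [hG, heatKernel]
    exact continuous_const.mul
      (((continuous_norm.pow 2).neg.div_const (4 * t)).rexp)
  have hGbdd : ∀ z, ‖G z‖ ≤ (4 * π * t) ^ (-(N : ℝ) / 2) := by
    intro z
    have h1 : (0:ℝ) < (4 * π * t) ^ (-(N : ℝ) / 2) := rpow_pos_of_pos (by positivity) _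
    have h2 : Real.exp (-‖z‖ ^ 2 / (4 * t)) ≤ 1 := by
      apply Real.exp_le_one_iff.mpr
      have h0 : (0:ℝ) ≤ ‖z‖ ^ 2 / (4 * t) := by positivity
      rw [neg_div]
      exact neg_nonpos.mpr h0
    have h3 : 0 < Real.exp (-‖z‖ ^ 2 / (4 * t)) := Real.exp_pos _
    simp only [hG, heatKernel, Real.norm_eq_abs]
    rw [abs_of_pos (by positivity)]
    calc (4 * π * t) ^ (-(N : ℝ) / 2) * Real.exp (-‖z‖ ^ 2 / (4 * t))
        ≤ (4 * π * t) ^ (-(N : ℝ) / 2) * 1 := by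
          exact mul_le_mul_of_nonneg_left h2 h1.le
      _ = _ := mul_one _
  have hint1 : Integrable (fun y => G (x - y) * u₀ y) :=
    hu.bdd_mul ((hGcont.comp (continuous_const.sub continuous_id)).aestronglyMeasurable)
      (Filter.Eventually.of_forall fun z => hGbdd (x - z))
  have hmaj : Integrable (fun y : EuclideanSpace ℝ (Fin N) => |u₀ y| + ‖y‖ ^ 2 * |u₀ y|) :=
    hu.abs.add h2
  have hnormle : ∀ y : EuclideanSpace ℝ (Fin N), ‖y‖ ≤ 1 + ‖y‖ ^ 2 := by
    intro y
    nlinarith [norm_nonneg y, sq_nonneg (‖y‖ - 1)]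
  have hinti : ∀ i : Fin N, Integrable (fun y : EuclideanSpace ℝ (Fin N) => y i * u₀ y) := by
    intro i
    apply hmaj.mono
    · exact (((continuous_apply i).comp (PiLp.continuous_ofLp 2 _)).aestronglyMeasurable.mul hu.1)
    · filter_upwards with y
      have h1 : |y i| ≤ ‖y‖ := by
        have := abs_real_inner_le_norm (EuclideanSpace.single i (1:ℝ)) y
        rwa [EuclideanSpace.inner_single_left, EuclideanSpace.norm_single,
          norm_one, one_mul, map_one, one_mul] at this
      have h2 : ‖y i * u₀ y‖ = |y i| * |u₀ y| := abs_mul _ _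
      have h3 : |u₀ y| + ‖y‖ ^ 2 * |u₀ y| ≤ ‖|u₀ y| + ‖y‖ ^ 2 * |u₀ y|‖ := le_abs_self _
      have h4 : |y i| * |u₀ y| ≤ (1 + ‖y‖ ^ 2) * |u₀ y| := by
        apply mul_le_mul_of_nonneg_right _ (abs_nonneg _)
        exact le_trans h1 (hnormle y)
      rw [h2]
      calc |y i| * |u₀ y| ≤ (1 + ‖y‖ ^ 2) * |u₀ y| := h4
        _ = |u₀ y| + ‖y‖ ^ 2 * |u₀ y| := by ring
        _ ≤ _ := h3
  have hintInner : Integrable (fun y : EuclideanSpace ℝ (Fin N) => ⟪x, y⟫ * u₀ y) := by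
    have : (fun y : EuclideanSpace ℝ (Fin N) => ⟪x, y⟫ * u₀ y)
        = fun y => ∑ i : Fin N, x i * (y i * u₀ y) := by
      funext y
      rw [PiLp.inner_apply]
      simp only [RCLike.inner_apply, starRingEnd_apply, star_trivial]
      rw [Finset.sum_mul]
      congr 1; funext i; ring
    rw [this]
    exact integrable_finset_sum _ (fun i _ => (hinti i).const_mul (x i))
  have hint3 : Integrable (fun y : EuclideanSpace ℝ (Fin N) => ⟪x, y⟫ / (2 * t) * G x * u₀ y) := by
    have : (fun y : EuclideanSpace ℝ (Fin N) => ⟪x, y⟫ / (2 * t) * G x * u₀ y)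
        = fun y => (G x / (2 * t)) * (⟪x, y⟫ * u₀ y) := by
      funext y; ring
    rw [this]
    exact hintInner.const_mul _
  have hint2 : Integrable (fun y : EuclideanSpace ℝ (Fin N) => G x * u₀ y) := hu.const_mul _
  -- rewrite the LHS as a single integral
  have hsum : ∑ i : Fin N, (∫ y : EuclideanSpace ℝ (Fin N), y i * u₀ y) *
        (-(x i / (2 * t)) * G x)
      = -(∫ y : EuclideanSpace ℝ (Fin N), ⟪x, y⟫ / (2 * t) * G x * u₀ y) := by
    have h1 : ∀ y : EuclideanSpace ℝ (Fin N), ⟪x, y⟫ / (2 * t) * G x * u₀ y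
        = ∑ i : Fin N, (y i * u₀ y) * (x i / (2 * t) * G x) := by
      intro y
      rw [PiLp.inner_apply]
      simp only [RCLike.inner_apply, starRingEnd_apply, star_trivial]
      rw [Finset.sum_div, Finset.sum_mul, Finset.sum_mul]
      congr 1; funext i; ring
    rw [integral_congr_ae (Filter.Eventually.of_forall h1)]
    rw [integral_finset_sum _ (fun i _ => (hinti i).mul_const _)]
    rw [← Finset.sum_neg_distrib]
    congr 1; funext i
    rw [integral_mul_const]
    ring
  have hTsplit : ∀ y, T y * u₀ y
      = G (x - y) * u₀ y - G x * u₀ y - ⟪x, y⟫ / (2 * t) * G x * u₀ y := by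
    intro y; simp only [hT]; ring
  have hint12 : Integrable (fun y => G (x - y) * u₀ y - G x * u₀ y) := hint1.sub hint2
  have hintT : Integrable (fun y => T y * u₀ y) := by
    have heq : (fun y => T y * u₀ y)
        = fun y => (G (x - y) * u₀ y - G x * u₀ y) - ⟪x, y⟫ / (2 * t) * G x * u₀ y := by
      funext y; rw [hTsplit y]
    rw [heq]
    exact hint12.sub hint3
  have hkey : heatSol N u₀ x t - (∫ y, u₀ y) * G x +
      ∑ i : Fin N, (∫ y : EuclideanSpace ℝ (Fin N), y i * u₀ y) * (-(x i / (2 * t)) * G x)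
      = ∫ y, T y * u₀ y := by
    rw [integral_congr_ae (Filter.Eventually.of_forall hTsplit)]
    rw [integral_sub hint12 hint3, integral_sub hint1 hint2]
    rw [hsum]
    have h2' : (∫ y, u₀ y) * G x = ∫ y, G x * u₀ y := by
      rw [integral_const_mul]; ring
    rw [heatSol, h2']
    ring
  rw [hkey]
  -- estimate
  have hTbound : ∀ y, ‖T y * u₀ y‖
      ≤ 3 / 2 * (4 * π) ^ (-(N : ℝ) / 2) * t ^ (-((N : ℝ) + 2) / 2) * (‖y‖ ^ 2 * |u₀ y|) := by
    intro y
    rw [Real.norm_eq_abs, abs_mul]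
    calc |T y| * |u₀ y|
        ≤ (3 / 2 * (4 * π) ^ (-(N : ℝ) / 2) * t ^ (-((N : ℝ) + 2) / 2) * ‖y‖ ^ 2) * |u₀ y| := by
          exact mul_le_mul_of_nonneg_right (heatKernel_taylor N ht x y) (abs_nonneg _)
      _ = _ := by ring
  calc |∫ y, T y * u₀ y| ≤ ∫ y, ‖T y * u₀ y‖ := by
        rw [← Real.norm_eq_abs]
        exact norm_integral_le_integral_norm _
    _ ≤ ∫ y, 3 / 2 * (4 * π) ^ (-(N : ℝ) / 2) * t ^ (-((N : ℝ) + 2) / 2) * (‖y‖ ^ 2 * |u₀ y|) := by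
        exact integral_mono hintT.norm (h2.const_mul _) hTbound
    _ = 3 / 2 * (4 * π) ^ (-(N : ℝ) / 2) * (∫ y, ‖y‖ ^ 2 * |u₀ y|) * t ^ (-((N : ℝ) + 2) / 2) := by
        rw [integral_const_mul]
        ring
end
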